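/- arXiv:2411.11403 — 4 statements merged into one kernel-verified Lean document; each statement's English description precedes it below -/
import Mathlib

section
/- For all a > 0 and z ∈ ℝ, exp(-a|z|) = (a/√(2π)) ∫₀^∞ η^{-1/2} exp(-z²/(2η) - a²η/2) dη. -/
open MeasureTheory Set Real

lemma glasser (a c : ℝ) (ha : 0 < a) (hc : 0 ≤ c) :
    ∫ t in Set.Ioi (0:ℝ), Real.exp (-(a*t - c/t)^2/2) = Real.sqrt (2*Real.pi) / (2*a) := by
  rcases eq_or_lt_of_le hc with hc0 | hc
  · subst hc0
    have heq : ∀ t ∈ Set.Ioi (0:ℝ), Real.exp (-(a*t - 0/t)^2/2) = Real.exp (-(a^2/2) * t^2) := by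
      intro t ht; ring_nf
    rw [setIntegral_congr_fun measurableSet_Ioi heq, integral_gaussian_Ioi]
    rw [show Real.pi / (a^2/2) = 2*Real.pi / a^2 by ring,
        Real.sqrt_div (by positivity) (a^2), Real.sqrt_sq ha.le]
    ring
  · set g : ℝ → ℝ := fun u => Real.exp (-u^2/2) with hg
    set φ : ℝ → ℝ := fun t => a*t - c/t with hφ
    have hderiv : ∀ t ∈ Set.Ioi (0:ℝ), HasDerivWithinAt φ (a + c/t^2) (Set.Ioi 0) t := by
      intro t ht
      have ht0 : t ≠ 0 := ne_of_gt ht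
      have h1 : HasDerivAt (fun x : ℝ => a * x - c * x⁻¹) (a * 1 - c * (-(t^2)⁻¹)) t :=
        ((hasDerivAt_id t).const_mul a).sub ((hasDerivAt_inv ht0).const_mul c)
      have h2 : a * 1 - c * (-(t^2)⁻¹) = a + c/t^2 := by field_simp; ring
      rw [h2] at h1
      have h3 : φ = fun x : ℝ => a * x - c * x⁻¹ := by
        funext x; simp [hφ, div_eq_mul_inv]
      rw [h3]
      exact h1.hasDerivWithinAt
    have hinj : Set.InjOn φ (Set.Ioi 0) := by
      intro x hx y hy h
      have hx0 : (0:ℝ) < x := hx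
      have hy0 : (0:ℝ) < y := hy
      simp only [hφ] at h
      have h2 : (a*x - c/x) * (x*y) = (a*y - c/y) * (x*y) := by rw [h]
      have h3 : (x*y) * ((x - y) * (a*x*y + c)) = 0 := by
        field_simp at h2
        linear_combination (x*y) * h2
      rcases mul_eq_zero.mp h3 with h4 | h4
      · nlinarith [mul_pos hx0 hy0]
      rcases mul_eq_zero.mp h4 with h5 | h5
      · linarith
      · nlinarith [mul_pos hx0 hy0]
    have himg : φ '' (Set.Ioi 0) = Set.univ := by
      apply Set.eq_univ_of_forall
      intro u
      have hs : (0:ℝ) < u^2 + 4*a*c := by nlinarith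
      set s := Real.sqrt (u^2 + 4*a*c) with hsdef
      have hs2 : s^2 = u^2 + 4*a*c := Real.sq_sqrt hs.le
      have hsu : |u| < s := by
        rw [← Real.sqrt_sq_eq_abs]
        exact Real.sqrt_lt_sqrt (sq_nonneg u) (by nlinarith)
      have habs := abs_lt.mp hsu
      have htpos : 0 < (u + s)/(2*a) := by
        apply div_pos _ (by linarith)
        linarith [habs.1]
      refine ⟨(u + s)/(2*a), htpos, ?_⟩
      have htne : (u + s)/(2*a) ≠ 0 := ne_of_gt htpos
      have hus : u + s ≠ 0 := by linarith [habs.1]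
      simp only [hφ]
      field_simp
      linear_combination hs2
    -- the Gaussian integral over ℝ
    have hgeq : g = fun u : ℝ => Real.exp (-(1/2:ℝ) * u^2) := by
      funext u; simp only [hg]; ring_nf
    have base : ∫ u : ℝ, g u = Real.sqrt (2*Real.pi) := by
      rw [hgeq, integral_gaussian, show Real.pi / (1/2) = 2*Real.pi by ring]
    have gint : Integrable g := by
      rw [hgeq]
      exact integrable_exp_neg_mul_sq (by norm_num)
    -- change of variables u = φ t
    have step1 : ∫ u : ℝ, g u = ∫ t in Set.Ioi (0:ℝ), |a + c/t^2| • g (φ t) := by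
      rw [← setIntegral_univ, ← himg,
        integral_image_eq_integral_abs_deriv_smul measurableSet_Ioi hderiv hinj]
    have habs : ∀ t ∈ Set.Ioi (0:ℝ), |a + c/t^2| • g (φ t) = (a + c/t^2) * g (φ t) := by
      intro t ht
      have ht0 : (0:ℝ) < t := ht
      rw [smul_eq_mul, abs_of_pos (by positivity)]
    have Fint : IntegrableOn (fun t => (a + c/t^2) * g (φ t)) (Set.Ioi 0) := by
      have := (integrableOn_image_iff_integrableOn_abs_deriv_smul measurableSet_Ioi
        hderiv hinj g).mp (by rw [himg]; exact gint.integrableOn)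
      exact this.congr_fun habs measurableSet_Ioi
    have hφcont : ContinuousOn φ (Set.Ioi 0) := by
      apply ContinuousOn.sub (continuousOn_const.mul continuousOn_id)
      exact continuousOn_const.div continuousOn_id (fun t ht => ne_of_gt ht)
    have fφ_meas : AEStronglyMeasurable (fun t => g (φ t)) (volume.restrict (Set.Ioi 0)) :=
      ((Real.continuous_exp.comp (by continuity : Continuous fun u : ℝ => -u^2/2)).comp_continuousOn
        hφcont).aestronglyMeasurable measurableSet_Ioi
    have fφ_int : IntegrableOn (fun t => g (φ t)) (Set.Ioi 0) := by
      apply Integrable.mono' (Fint.const_mul (1/a)) fφ_meas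
      rw [ae_restrict_iff' measurableSet_Ioi]
      filter_upwards with t
      intro ht
      have ht0 : (0:ℝ) < t := ht
      have hgp : 0 < g (φ t) := Real.exp_pos _
      rw [Real.norm_eq_abs, abs_of_pos hgp]
      have : 0 ≤ c/t^2 := by positivity
      rw [div_mul_eq_mul_div, le_div_iff₀ ha]
      nlinarith
    have hzero : ∫ t in Set.Ioi (0:ℝ), (c/t^2 - a) * g (φ t) = 0 := by
      set ψ : ℝ → ℝ := fun t => (c/a) * t⁻¹ with hψ
      have hψderiv : ∀ t ∈ Set.Ioi (0:ℝ),
          HasDerivWithinAt ψ ((c/a) * (-(t^2)⁻¹)) (Set.Ioi 0) t := by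
        intro t ht
        exact ((hasDerivAt_inv (ne_of_gt ht)).const_mul (c/a)).hasDerivWithinAt
      have hca : (0:ℝ) < c/a := div_pos hc ha
      have hψinj : Set.InjOn ψ (Set.Ioi 0) := by
        intro x hx y hy h
        simp only [hψ] at h
        have := mul_left_cancel₀ (ne_of_gt hca) h
        exact inv_injective this
      have hψimg : ψ '' (Set.Ioi 0) = Set.Ioi 0 := by
        apply Set.Subset.antisymm
        · rintro _ ⟨t, ht, rfl⟩
          have ht0 : (0:ℝ) < t := ht
          simp only [hψ]
          exact mul_pos hca (inv_pos.mpr ht0)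
        · intro y hy
          have hy0 : (0:ℝ) < y := hy
          refine ⟨(c/a) * y⁻¹, mul_pos hca (inv_pos.mpr hy0), ?_⟩
          simp only [hψ]
          field_simp
      have key := integral_image_eq_integral_abs_deriv_smul measurableSet_Ioi hψderiv hψinj
        (fun t => (c/t^2 - a) * g (φ t))
      rw [hψimg] at key
      have heq : ∀ s ∈ Set.Ioi (0:ℝ),
          |(c/a) * (-(s^2)⁻¹)| • ((c/(ψ s)^2 - a) * g (φ (ψ s)))
            = -((c/s^2 - a) * g (φ s)) := by
        intro s hs
        have hs0 : (0:ℝ) < s := hs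
        have hψs : ψ s = (c/a) * s⁻¹ := rfl
        have hψspos : (0:ℝ) < ψ s := by rw [hψs]; positivity
        have hφψ : φ (ψ s) = -(φ s) := by
          simp only [hφ, hψs]
          field_simp
          ring
        have hgψ : g (φ (ψ s)) = g (φ s) := by
          rw [hφψ]; simp [hg, neg_sq]
        have habs2 : |(c/a) * (-(s^2)⁻¹)| = (c/a) * (s^2)⁻¹ := by
          rw [abs_mul, abs_neg, abs_inv, abs_of_pos hca, abs_of_pos (by positivity : (0:ℝ) < s^2)]
        rw [smul_eq_mul, habs2, hgψ]
        have hcoef : (c/a) * (s^2)⁻¹ * (c/(ψ s)^2 - a) = -(c/s^2 - a) := by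
          rw [hψs]
          field_simp
          ring
        linear_combination g (φ s) * hcoef
      rw [setIntegral_congr_fun measurableSet_Ioi heq, integral_neg] at key
      linarith
    have split : ∫ t in Set.Ioi (0:ℝ), (a + c/t^2) * g (φ t)
        = 2*a * ∫ t in Set.Ioi (0:ℝ), g (φ t) := by
      have heq2 : ∀ t ∈ Set.Ioi (0:ℝ), (a + c/t^2) * g (φ t)
          = 2*a * g (φ t) + (c/t^2 - a) * g (φ t) := by
        intro t ht; ring
      rw [setIntegral_congr_fun measurableSet_Ioi heq2,
        integral_add ((fφ_int.const_mul (2*a))) ?hint, hzero, add_zero, integral_const_mul]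
      case hint =>
        have : (fun t => (c/t^2 - a) * g (φ t))
            = (fun t => (a + c/t^2) * g (φ t)) - (fun t => 2*a * g (φ t)) := by
          funext t; simp; ring
        rw [this]
        exact Fint.sub (fφ_int.const_mul (2*a))
    have final : Real.sqrt (2*Real.pi) = 2*a * ∫ t in Set.Ioi (0:ℝ), g (φ t) := by
      rw [← base, step1, setIntegral_congr_fun measurableSet_Ioi habs, split]
    have h2a : (2*a) ≠ 0 := by positivity
    rw [eq_div_iff h2a, mul_comm]
    exact final.symm

open MeasureTheory

/-- Scale-mixture-of-Gaussians representation of the Laplace density. -/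
theorem laplace_gaussian_mixture (a z : ℝ) (ha : 0 < a) :
    Real.exp (-(a * |z|)) =
      a / Real.sqrt (2 * Real.pi) *
        ∫ η in Set.Ioi (0 : ℝ),
          η ^ (-(1 / 2) : ℝ) * Real.exp (-(z ^ 2 / (2 * η)) - a ^ 2 * η / 2) := by
  set c := |z| with hcdef
  have hc : 0 ≤ c := abs_nonneg z
  have hc2 : c^2 = z^2 := sq_abs z
  have hsq_deriv : ∀ t ∈ Set.Ioi (0:ℝ), HasDerivWithinAt (fun t : ℝ => t^2) (2*t) (Set.Ioi 0) t := by
    intro t ht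
    simpa using (hasDerivAt_pow 2 t).hasDerivWithinAt
  have hsq_inj : Set.InjOn (fun t : ℝ => t^2) (Set.Ioi 0) := by
    intro x hx y hy h
    have hx0 : (0:ℝ) < x := hx
    have hy0 : (0:ℝ) < y := hy
    simp only at h
    nlinarith
  have hsq_img : (fun t : ℝ => t^2) '' (Set.Ioi 0) = Set.Ioi 0 := by
    apply Set.Subset.antisymm
    · rintro _ ⟨t, ht, rfl⟩
      have ht0 : (0:ℝ) < t := ht
      exact pow_pos ht0 2
    · intro y hy
      have hy0 : (0:ℝ) < y := hy
      exact ⟨Real.sqrt y, Real.sqrt_pos.mpr hy0, Real.sq_sqrt hy0.le⟩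
  rw [show Set.Ioi (0:ℝ) = (fun t : ℝ => t^2) '' Set.Ioi 0 from hsq_img.symm,
    integral_image_eq_integral_abs_deriv_smul measurableSet_Ioi hsq_deriv hsq_inj]
  have hpt : ∀ t ∈ Set.Ioi (0:ℝ),
      |2*t| • (((t^2:ℝ)) ^ (-(1/2) : ℝ) * Real.exp (-(z ^ 2 / (2 * t^2)) - a ^ 2 * t^2 / 2))
        = (2 * Real.exp (-(a*c))) * Real.exp (-(a*t - c/t)^2/2) := by
    intro t ht
    have ht0 : (0:ℝ) < t := ht
    have h1 : ((t^2:ℝ)) ^ (-(1/2) : ℝ) = t⁻¹ := by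
      rw [← Real.rpow_natCast t 2, ← Real.rpow_mul ht0.le]
      norm_num [Real.rpow_neg_one]
    have h2 : -(z ^ 2 / (2 * t^2)) - a ^ 2 * t^2 / 2 = -(a*c) + (-(a*t - c/t)^2/2) := by
      rw [← hc2]
      field_simp
      ring
    rw [h1, h2, Real.exp_add, smul_eq_mul, abs_of_pos (by positivity : (0:ℝ) < 2*t)]
    field_simp
  rw [setIntegral_congr_fun measurableSet_Ioi hpt, integral_const_mul,
    glasser a c ha hc]
  have hπ : (0:ℝ) < Real.sqrt (2*Real.pi) := Real.sqrt_pos.mpr (by positivity)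
  field_simp
end

section
/- Let β, λ > 0 and let G : ℝᵈ → ℝ be measurable and bounded below. Define π(u,v) = (1/Z_π) (∏ᵢ uᵢ) exp(-β(½λ‖(u,v)‖² + G(u ⊙ v))) on X = (0,∞)ᵈ × ℝᵈ and ρ(x) = (1/Z) exp(-β(λ‖x‖₁ + G(x))) on ℝᵈ. Then for every bounded measurable φ : ℝᵈ → ℝ, ∫_X φ(u ⊙ v) π(u,v) du dv = ∫_{ℝᵈ} φ(x) ρ(x) dx; i.e., if (u,v) ∼ π then u ⊙ v ∼ ρ. -/
open MeasureTheory Set Real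

lemma diag_scaling {d : ℕ} (u : Fin d → ℝ) (hu : ∀ i, 0 < u i) (f : (Fin d → ℝ) → ℝ) :
    ∫ x, f x = (∏ i, u i) * ∫ v : Fin d → ℝ, f (fun i => u i * v i) := by
  classical
  set L : (Fin d → ℝ) →ₗ[ℝ] (Fin d → ℝ) := Matrix.toLin' (Matrix.diagonal u) with hL
  set Lc : (Fin d → ℝ) →L[ℝ] (Fin d → ℝ) := LinearMap.toContinuousLinearMap L with hLc
  have hfun : (fun v : Fin d → ℝ => (fun i => u i * v i)) = ⇑Lc := by
    funext v i
    simp [hLc, hL, Matrix.toLin'_apply, Matrix.mulVec_diagonal]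
  have hdet : Lc.det = ∏ i, u i := by
    have : Lc.det = LinearMap.det L := rfl
    rw [this, hL, LinearMap.det_toLin', Matrix.det_diagonal]
  have hinj : Function.Injective (⇑Lc) := by
    rw [← hfun]
    intro x y hxy
    funext i
    exact mul_left_cancel₀ (hu i).ne' (congrFun hxy i)
  have himg : (⇑Lc) '' univ = univ := by
    rw [← hfun]
    apply image_univ_of_surjective
    intro y
    exact ⟨fun i => y i / (u i), funext fun i => by show u i * (y i / u i) = y i; rw [mul_comm, div_mul_cancel₀ _ (hu i).ne']⟩
  have key := integral_image_eq_integral_abs_det_fderiv_smul volume MeasurableSet.univ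
      (fun x _ => (Lc.hasFDerivAt).hasFDerivWithinAt) hinj.injOn f
  simp only [himg, Measure.restrict_univ] at key
  rw [key, ← integral_const_mul]
  congr 1
  funext v
  rw [hdet, smul_eq_mul, abs_of_pos (Finset.prod_pos fun i _ => hu i), ← hfun]
open MeasureTheory Set Real

lemma glasser_s3 {a : ℝ} (ha : 0 < a) {b : ℝ} (hb : 0 ≤ b) :
    ∫ t in Ioi (0:ℝ), exp (-(a * (t^2 + b^2/t^2)))
      = Real.sqrt (π/a)/2 * exp (-(2*a*b)) := by
  rcases eq_or_lt_of_le hb with hb0 | hbpos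
  · have h1 : ∫ t in Ioi (0:ℝ), exp (-(a * (t^2 + b^2/t^2)))
        = ∫ t in Ioi (0:ℝ), exp (-a * t^2) := by
      apply setIntegral_congr_fun measurableSet_Ioi
      intro t ht
      rw [← hb0]
      norm_num
    rw [h1, integral_gaussian_Ioi, ← hb0]
    norm_num
  set f : ℝ → ℝ := fun t => exp (-(a * (t^2 + b^2/t^2))) with hf
  have hfm : Measurable f := by
    apply Measurable.exp; fun_prop
  have hf_int : IntegrableOn f (Ioi 0) := by
    apply Integrable.mono' ((integrable_exp_neg_mul_sq ha).integrableOn)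
      hfm.aestronglyMeasurable.restrict
    filter_upwards with t
    rw [hf, Real.norm_eq_abs, abs_of_pos (exp_pos _), Real.exp_le_exp]
    nlinarith [div_nonneg (sq_nonneg b) (sq_nonneg t), sq_nonneg t]
  -- step G2 : substitution t ↦ b/t
  have hsub2 : ∫ t in Ioi (0:ℝ), (b/t^2) * f t = ∫ t in Ioi (0:ℝ), f t := by
    have hderiv : ∀ t ∈ Ioi (0:ℝ), HasDerivWithinAt (fun t => b/t) (-(b/t^2)) (Ioi 0) t := by
      intro t ht
      have h := ((hasDerivAt_inv (ne_of_gt ht)).const_mul b)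
      have heq : b * -(t^2)⁻¹ = -(b/t^2) := by field_simp
      simpa [div_eq_mul_inv, heq] using h.hasDerivWithinAt
    have hinj : InjOn (fun t => b/t) (Ioi 0) := by
      intro x hx y hy hxy
      have hxy' : b / x = b / y := hxy
      rw [div_eq_div_iff (ne_of_gt hx) (ne_of_gt hy)] at hxy'
      exact (mul_left_cancel₀ (ne_of_gt hbpos) hxy').symm
    have himg : (fun t => b/t) '' (Ioi 0) = Ioi 0 := by
      apply Subset.antisymm
      · rintro _ ⟨t, ht, rfl⟩
        exact div_pos hbpos ht
      · intro y hy
        exact ⟨b/y, div_pos hbpos hy, by field_simp⟩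
    have key := integral_image_eq_integral_abs_deriv_smul measurableSet_Ioi hderiv hinj f
    rw [himg] at key
    rw [key]
    apply setIntegral_congr_fun measurableSet_Ioi
    intro t ht
    have ht' : (t:ℝ) ≠ 0 := ne_of_gt ht
    have hb' : b ≠ 0 := ne_of_gt hbpos
    show b/t^2 * f t = |(-(b/t^2))| • f (b/t)
    have habs : |(-(b/t^2))| = b/t^2 := by
      rw [abs_neg, abs_of_pos (by positivity)]
    have harg : (b/t)^2 + b^2/(b/t)^2 = t^2 + b^2/t^2 := by
      field_simp
      ring
    rw [habs, smul_eq_mul, hf]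
    show b/t^2 * exp (-(a * (t^2 + b^2/t^2)))
        = b/t^2 * exp (-(a * ((b/t)^2 + b^2/(b/t)^2)))
    rw [harg]
  -- step G1 : substitution s = t - b/t
  have hderiv : ∀ t ∈ Ioi (0:ℝ), HasDerivWithinAt (fun t => t - b/t) (1 + b/t^2) (Ioi 0) t := by
    intro t ht
    have h1 := (hasDerivAt_id' t).fun_sub ((hasDerivAt_inv (ne_of_gt ht)).const_mul b)
    have heq : (1:ℝ) - b * -(t^2)⁻¹ = 1 + b/t^2 := by field_simp; ring
    simpa [div_eq_mul_inv, heq] using h1.hasDerivWithinAt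
  have hinj : InjOn (fun t => t - b/t) (Ioi 0) := by
    intro x hx y hy hxy
    have hx' : (0:ℝ) < x := hx
    have hy' : (0:ℝ) < y := hy
    have hxy' : x - b/x = y - b/y := hxy
    field_simp at hxy'
    nlinarith [mul_pos hx' hy']
  have himg : (fun t => t - b/t) '' (Ioi 0) = univ := by
    apply Subset.antisymm (subset_univ _)
    intro y _
    set s := Real.sqrt (y^2 + 4*b) with hs
    have hs2 : s^2 = y^2 + 4*b := Real.sq_sqrt (by nlinarith)
    have hsnn : 0 ≤ s := Real.sqrt_nonneg _
    have htpos : 0 < (y + s)/2 := by nlinarith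
    refine ⟨(y+s)/2, htpos, ?_⟩
    have hys : (0:ℝ) < y + s := by linarith
    show (y+s)/2 - b/((y+s)/2) = y
    field_simp [hys.ne']
    nlinarith
  have key := integral_image_eq_integral_abs_deriv_smul measurableSet_Ioi hderiv hinj
      (fun s => exp (-(a * s^2)))
  have keyInt := (integrableOn_image_iff_integrableOn_abs_deriv_smul measurableSet_Ioi hderiv hinj
      (fun s => exp (-(a * s^2)))).mp (by
        rw [himg, integrableOn_univ]
        simpa [neg_mul] using (integrable_exp_neg_mul_sq ha))
  rw [himg] at key
  have hgauss : ∫ s in (univ : Set ℝ), exp (-(a * s^2)) = Real.sqrt (π/a) := by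
    rw [Measure.restrict_univ]
    simpa [neg_mul] using integral_gaussian a
  -- pointwise identity on Ioi 0
  have hpt : ∀ t ∈ Ioi (0:ℝ),
      |1 + b/t^2| • exp (-(a * (t - b/t)^2)) = exp (2*a*b) * ((1 + b/t^2) * f t) := by
    intro t ht
    have ht' : (t:ℝ) ≠ 0 := ne_of_gt ht
    have habs : |1 + b/t^2| = 1 + b/t^2 := abs_of_pos (by positivity)
    rw [habs, smul_eq_mul, hf]
    have hexp : -(a * (t - b/t)^2) = 2*a*b + -(a * (t^2 + b^2/t^2)) := by
      field_simp
      ring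
    rw [hexp, Real.exp_add]
    ring
  have hI1 : IntegrableOn (fun t => (1 + b/t^2) * f t) (Ioi 0) := by
    have h0 : IntegrableOn (fun t => exp (2*a*b) * ((1 + b/t^2) * f t)) (Ioi 0) := by
      apply (integrableOn_congr_fun ?_ measurableSet_Ioi).mp keyInt
      intro t ht
      exact hpt t ht
    have h2 := h0.const_mul (exp (-(2*a*b)))
    apply (integrableOn_congr_fun ?_ measurableSet_Ioi).mp h2
    intro t ht
    show exp (-(2*a*b)) * (exp (2*a*b) * ((1 + b/t^2) * f t)) = (1 + b/t^2) * f t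
    rw [← mul_assoc, ← Real.exp_add]
    norm_num
  have h1 : ∫ t in Ioi (0:ℝ), |1 + b/t^2| • exp (-(a * (t - b/t)^2))
      = ∫ t in Ioi (0:ℝ), exp (2*a*b) * ((1 + b/t^2) * f t) :=
    setIntegral_congr_fun measurableSet_Ioi hpt
  have key2 : Real.sqrt (π/a) = exp (2*a*b) * ∫ t in Ioi (0:ℝ), (1 + b/t^2) * f t := by
    rw [← hgauss, key, h1, integral_const_mul]
  have hval : ∫ t in Ioi (0:ℝ), (1 + b/t^2) * f t = exp (-(2*a*b)) * Real.sqrt (π/a) := by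
    rw [key2, Real.exp_neg, ← mul_assoc, inv_mul_cancel₀ (Real.exp_ne_zero _), one_mul]
  have hIb : IntegrableOn (fun t => (b/t^2) * f t) (Ioi 0) := by
    have h3 := hI1.sub hf_int
    apply (integrableOn_congr_fun ?_ measurableSet_Ioi).mp h3
    intro t ht
    simp only [Pi.sub_apply]
    ring
  have hsplit : ∫ t in Ioi (0:ℝ), (1 + b/t^2) * f t
      = (∫ t in Ioi (0:ℝ), f t) + ∫ t in Ioi (0:ℝ), (b/t^2) * f t := by
    rw [← integral_add hf_int hIb]
    apply setIntegral_congr_fun measurableSet_Ioi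
    intro t ht
    ring
  rw [hval, hsub2] at hsplit
  have hend : ∫ t in Ioi (0:ℝ), f t = Real.sqrt (π/a)/2 * exp (-(2*a*b)) := by linarith
  exact hend
open MeasureTheory Set Real

lemma indicator_pi_prod {d : ℕ} (f : Fin d → ℝ → ℝ) (u : Fin d → ℝ) :
    (univ.pi fun _ : Fin d => Ioi (0:ℝ)).indicator (fun u => ∏ i, f i (u i)) u
      = ∏ i, (Ioi (0:ℝ)).indicator (f i) (u i) := by
  by_cases h : u ∈ univ.pi fun _ : Fin d => Ioi (0:ℝ)
  · rw [indicator_of_mem h]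
    exact Finset.prod_congr rfl fun i _ => (indicator_of_mem (h i (mem_univ i)) _).symm
  · rw [indicator_of_notMem h]
    rw [mem_univ_pi] at h
    push_neg at h
    obtain ⟨i, hi⟩ := h
    exact (Finset.prod_eq_zero (Finset.mem_univ i) (indicator_of_notMem hi _)).symm

lemma integral_pi_Ioi {d : ℕ} (f : Fin d → ℝ → ℝ) :
    ∫ u in univ.pi (fun _ : Fin d => Ioi (0:ℝ)), ∏ i, f i (u i)
      = ∏ i, ∫ t in Ioi (0:ℝ), f i t := by
  rw [← integral_indicator (MeasurableSet.univ_pi fun _ => measurableSet_Ioi)]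
  simp_rw [indicator_pi_prod f]
  rw [MeasureTheory.integral_fintype_prod_volume_eq_prod
    (fun i => (Ioi (0:ℝ)).indicator (f i))]
  exact Finset.prod_congr rfl fun i _ => by rw [integral_indicator measurableSet_Ioi]

lemma integrableOn_pi_Ioi {d : ℕ} (f : Fin d → ℝ → ℝ)
    (hf : ∀ i, IntegrableOn (f i) (Ioi (0:ℝ))) :
    IntegrableOn (fun u : Fin d → ℝ => ∏ i, f i (u i))
      (univ.pi fun _ : Fin d => Ioi (0:ℝ)) := by
  refine (integrable_indicator_iff
    (MeasurableSet.univ_pi fun _ => measurableSet_Ioi)).mp ?_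
  have : (univ.pi fun _ : Fin d => Ioi (0:ℝ)).indicator
      (fun u : Fin d → ℝ => ∏ i, f i (u i))
      = fun u : Fin d → ℝ => ∏ i, (Ioi (0:ℝ)).indicator (f i) (u i) :=
    funext fun u => indicator_pi_prod f u
  rw [this]
  exact Integrable.fintype_prod fun i =>
    (integrable_indicator_iff measurableSet_Ioi).mpr (hf i)

lemma integrable_exp_neg_abs {k : ℝ} (hk : 0 < k) :
    Integrable fun t : ℝ => exp (-(k * |t|)) := by
  have h1 : IntegrableOn (fun t : ℝ => exp (-(k*|t|))) (Ioi 0) := by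
    apply (exp_neg_integrableOn_Ioi 0 hk).congr_fun ?_ measurableSet_Ioi
    intro t ht
    show exp (-k * t) = exp (-(k * |t|))
    rw [abs_of_pos ht, neg_mul]
  have h2 : IntegrableOn (fun t : ℝ => exp (-(k*|t|))) (Iic 0) := by
    rw [IntegrableOn, ← Measure.map_neg_eq_self (volume : Measure ℝ), ← IntegrableOn]
    have m : MeasurableEmbedding fun x : ℝ => -x := (Homeomorph.neg ℝ).measurableEmbedding
    rw [m.integrableOn_map_iff]
    simp_rw [Function.comp_def, abs_neg, neg_preimage, neg_Iic, neg_zero]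
    exact Iff.mpr integrableOn_Ici_iff_integrableOn_Ioi h1
  rw [← integrableOn_univ, ← Iic_union_Ioi (a := (0:ℝ))]
  exact h2.union h1

set_option maxHeartbeats 1000000 in
lemma key_identity {d : ℕ} {β lam : ℝ} (hβ : 0 < β) (hlam : 0 < lam)
    (G : (Fin d → ℝ) → ℝ) (hG : Measurable G) (C : ℝ) (hGb : ∀ x, C ≤ G x)
    (φ : (Fin d → ℝ) → ℝ) (hφm : Measurable φ) (M : ℝ) (hφb : ∀ x, |φ x| ≤ M) :
    (∫ p in {p : (Fin d → ℝ) × (Fin d → ℝ) | ∀ i, 0 < p.1 i},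
        φ (fun i => p.1 i * p.2 i) * ((∏ i, p.1 i) *
          Real.exp (-β * (lam / 2 * ((∑ i, p.1 i ^ 2) + ∑ i, p.2 i ^ 2) +
            G (fun i => p.1 i * p.2 i)))))
      = (Real.sqrt (π/(β*lam/2))/2)^d *
        ∫ x : Fin d → ℝ, φ x * Real.exp (-β * (lam * ∑ i, |x i| + G x)) := by
  have hM0 : 0 ≤ M := le_trans (abs_nonneg _) (hφb 0)
  set a : ℝ := β * lam / 2 with ha_def
  have ha : 0 < a := by positivity
  set P : Set (Fin d → ℝ) := univ.pi fun _ : Fin d => Ioi (0:ℝ) with hP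
  have hPm : MeasurableSet P := MeasurableSet.univ_pi fun _ => measurableSet_Ioi
  set F : (Fin d → ℝ) × (Fin d → ℝ) → ℝ := fun p =>
    φ (fun i => p.1 i * p.2 i) * ((∏ i, p.1 i) *
      Real.exp (-β * (lam / 2 * ((∑ i, p.1 i ^ 2) + ∑ i, p.2 i ^ 2) +
        G (fun i => p.1 i * p.2 i)))) with hF
  set Q : (Fin d → ℝ) → (Fin d → ℝ) → ℝ := fun u x =>
    φ x * Real.exp (-β * G x) * ∏ i, Real.exp (-(a * ((u i)^2 + (x i)^2/(u i)^2))) with hQ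
  have hmulm : Measurable fun p : (Fin d → ℝ) × (Fin d → ℝ) => (fun i => p.1 i * p.2 i) :=
    measurable_pi_lambda _ fun i =>
      ((measurable_pi_apply i).comp measurable_fst).mul
        ((measurable_pi_apply i).comp measurable_snd)
  have hFm : Measurable F := by
    apply Measurable.mul (hφm.comp hmulm)
    apply Measurable.mul
    · exact Finset.measurable_prod _ fun i _ => (measurable_pi_apply i).comp measurable_fst
    · apply Measurable.exp
      apply Measurable.const_mul
      apply Measurable.add ?_ (hG.comp hmulm)
      apply Measurable.const_mul
      apply Measurable.add <;>
        exact Finset.measurable_sum _ fun i _ => by fun_prop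
  have hQum : Measurable fun p : (Fin d → ℝ) × (Fin d → ℝ) => Q p.1 p.2 := by
    apply Measurable.mul
    · exact ((hφm.comp measurable_snd).mul
        (((hG.comp measurable_snd).const_mul _).exp))
    · exact Finset.measurable_prod _ fun i _ => by fun_prop
  -- exponential algebra
  have e1 : ∀ (u v : Fin d → ℝ) (w : Fin d → ℝ),
      Real.exp (-β * (lam / 2 * ((∑ i, u i ^ 2) + ∑ i, v i ^ 2) + G w))
        = Real.exp (-β * G w) * ∏ i, Real.exp (-(a * ((u i)^2 + (v i)^2))) := by
    intro u v w
    rw [← Real.exp_sum, ← Real.exp_add]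
    congr 1
    have hs : ∑ i, -(a * ((u i)^2 + (v i)^2))
        = -(a * ((∑ i, (u i)^2) + ∑ i, (v i)^2)) := by
      rw [Finset.sum_neg_distrib, ← Finset.mul_sum, Finset.sum_add_distrib]
    rw [hs, ha_def]
    ring
  have hFQ : ∀ u, (∀ i, 0 < u i) → ∀ v : Fin d → ℝ,
      F (u, v) = (∏ i, u i) * Q u (fun i => u i * v i) := by
    intro u hu v
    have hprod : (∏ i, Real.exp (-(a * ((u i)^2 + ((u i * v i))^2/(u i)^2))))
        = ∏ i, Real.exp (-(a * ((u i)^2 + (v i)^2))) := by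
      apply Finset.prod_congr rfl
      intro i _
      congr 2
      have hne : u i ≠ 0 := ne_of_gt (hu i)
      field_simp
    rw [hF, hQ]
    simp only []
    rw [hprod, e1 u v (fun i => u i * v i)]
    ring
  -- integrability of F
  have hD1 : Integrable (fun u : Fin d → ℝ =>
      (∏ i, |u i|) * ∏ i, Real.exp (-a * (u i)^2)) volume := by
    have h := Integrable.fintype_prod (f := fun _ : Fin d => fun t : ℝ =>
      |t| * Real.exp (-a * t^2)) fun i => by
        have h2 := (integrable_mul_exp_neg_mul_sq ha).abs
        apply h2.congr
        filter_upwards with t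
        rw [abs_mul, abs_of_pos (Real.exp_pos _)]
    apply h.congr
    filter_upwards with u
    rw [← Finset.prod_mul_distrib]
  have hD2 : Integrable (fun v : Fin d → ℝ => ∏ i, Real.exp (-a * (v i)^2)) volume :=
    Integrable.fintype_prod fun i => integrable_exp_neg_mul_sq ha
  have hDint : Integrable (fun p : (Fin d → ℝ) × (Fin d → ℝ) =>
      (M * Real.exp (-β * C)) * (((∏ i, |p.1 i|) * ∏ i, Real.exp (-a * (p.1 i)^2)) *
        ∏ i, Real.exp (-a * (p.2 i)^2))) (volume.prod volume) :=
    (hD1.mul_prod hD2).const_mul _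
  have hmeq : (volume.restrict P).prod (volume : Measure (Fin d → ℝ))
      = (volume : Measure ((Fin d → ℝ) × (Fin d → ℝ))).restrict (P ×ˢ univ) := by
    rw [Measure.volume_eq_prod, ← Measure.prod_restrict, Measure.restrict_univ]
  have hFbd : ∀ p : (Fin d → ℝ) × (Fin d → ℝ), (∀ i, 0 < p.1 i) →
      ‖F p‖ ≤ (M * Real.exp (-β * C)) * (((∏ i, |p.1 i|) * ∏ i, Real.exp (-a * (p.1 i)^2)) *
        ∏ i, Real.exp (-a * (p.2 i)^2)) := by
    intro p hu
    rw [hF]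
    simp only [Real.norm_eq_abs]
    rw [abs_mul, abs_mul, e1 p.1 p.2 (fun i => p.1 i * p.2 i), Finset.abs_prod]
    rw [abs_mul, abs_of_pos (Real.exp_pos _)]
    have habs2 : |∏ i, Real.exp (-(a * ((p.1 i)^2 + (p.2 i)^2)))|
        = (∏ i, Real.exp (-a * (p.1 i)^2)) * ∏ i, Real.exp (-a * (p.2 i)^2) := by
      rw [abs_of_nonneg (Finset.prod_nonneg fun i _ => (Real.exp_pos _).le),
        ← Finset.prod_mul_distrib]
      apply Finset.prod_congr rfl
      intro i _
      rw [← Real.exp_add]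
      ring_nf
    rw [habs2]
    have h1 : |φ fun i => p.1 i * p.2 i| ≤ M := hφb _
    have h2 : Real.exp (-β * G fun i => p.1 i * p.2 i) ≤ Real.exp (-β * C) := by
      rw [Real.exp_le_exp]
      have := hGb (fun i => p.1 i * p.2 i)
      nlinarith
    have hnn1 : (0:ℝ) ≤ ∏ i, |p.1 i| := Finset.prod_nonneg fun i _ => abs_nonneg _
    calc |φ fun i => p.1 i * p.2 i| * ((∏ i, |p.1 i|) *
          (Real.exp (-β * G fun i => p.1 i * p.2 i) *
            ((∏ i, Real.exp (-a * (p.1 i)^2)) * ∏ i, Real.exp (-a * (p.2 i)^2))))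
        ≤ M * ((∏ i, |p.1 i|) * (Real.exp (-β * C) *
            ((∏ i, Real.exp (-a * (p.1 i)^2)) * ∏ i, Real.exp (-a * (p.2 i)^2)))) := by
          apply mul_le_mul h1 ?_ (by positivity) hM0
          apply mul_le_mul_of_nonneg_left ?_ hnn1
          apply mul_le_mul_of_nonneg_right h2 (by positivity)
      _ = (M * Real.exp (-β * C)) * (((∏ i, |p.1 i|) * ∏ i, Real.exp (-a * (p.1 i)^2)) *
            ∏ i, Real.exp (-a * (p.2 i)^2)) := by ring
  have hFint : Integrable F ((volume.restrict P).prod volume) := by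
    rw [hmeq, Measure.volume_eq_prod]
    apply Integrable.mono' (hDint.restrict (s := P ×ˢ univ))
      hFm.aestronglyMeasurable.restrict
    filter_upwards [ae_restrict_mem (hPm.prod MeasurableSet.univ)] with p hp
    exact hFbd p (fun i => hp.1 i (mem_univ i))
  -- first Fubini
  have hSP : {p : (Fin d → ℝ) × (Fin d → ℝ) | ∀ i, 0 < p.1 i} = P ×ˢ univ := by
    ext p
    simp [hP, Set.mem_pi]
  have hset : ∫ p in P ×ˢ univ, F p = ∫ u in P, ∫ v, F (u, v) := by
    rw [Measure.volume_eq_prod, setIntegral_prod F ?hint]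
    · simp [Measure.restrict_univ]
    case hint =>
      rw [IntegrableOn, ← Measure.volume_eq_prod, ← hmeq]
      exact hFint
  have hinner : ∫ u in P, ∫ v, F (u, v) = ∫ u in P, ∫ x, Q u x := by
    apply setIntegral_congr_fun hPm
    intro u hu
    have hui : ∀ i, 0 < u i := fun i => hu i (mem_univ i)
    calc ∫ v, F (u, v) = ∫ v : Fin d → ℝ, (∏ i, u i) * Q u (fun i => u i * v i) := by
          congr 1
          funext v
          exact hFQ u hui v
      _ = (∏ i, u i) * ∫ v : Fin d → ℝ, Q u (fun i => u i * v i) := integral_const_mul _ _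
      _ = ∫ x, Q u x := (diag_scaling u hui (Q u)).symm
  -- second Fubini
  set R : (Fin d → ℝ) × (Fin d → ℝ) → ℝ := fun p =>
    ∏ i, Real.exp (-(a * ((p.1 i)^2 + (p.2 i)^2/(p.1 i)^2))) with hR
  have hRm : Measurable R := Finset.measurable_prod _ fun i _ => by fun_prop
  have hfi : ∀ u : Fin d → ℝ, (∀ i, 0 < u i) →
      Integrable (fun x : Fin d → ℝ =>
        ∏ i, Real.exp (-(a * ((u i)^2 + (x i)^2/(u i)^2)))) volume := by
    intro u hu
    apply Integrable.fintype_prod (f := fun i (t:ℝ) => Real.exp (-(a * ((u i)^2 + t^2/(u i)^2))))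
    intro i
    have hpos : 0 < a / (u i)^2 := div_pos ha (pow_pos (hu i) 2)
    have h2 := (integrable_exp_neg_mul_sq hpos).const_mul (Real.exp (-(a * (u i)^2)))
    apply h2.congr
    filter_upwards with t
    rw [← Real.exp_add]
    congr 1
    have hne : u i ≠ 0 := ne_of_gt (hu i)
    field_simp
    ring
  have hWint : IntegrableOn (fun s : ℝ =>
      Real.exp (-(a*s^2)) * Real.sqrt (π/(a/s^2))) (Ioi 0) := by
    have h0 : IntegrableOn (fun s : ℝ => Real.sqrt (π/a) * (s * Real.exp (-a * s^2)))
        (Ioi 0) := ((integrable_mul_exp_neg_mul_sq ha).const_mul (Real.sqrt (π/a))).integrableOn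
    apply IntegrableOn.congr_fun h0 ?_ measurableSet_Ioi
    intro s hs
    have hs0 : (0:ℝ) < s := hs
    show Real.sqrt (π/a) * (s * Real.exp (-a * s^2))
        = Real.exp (-(a*s^2)) * Real.sqrt (π/(a/s^2))
    rw [show π/(a/s^2) = s^2 * (π/a) by field_simp]
    rw [Real.sqrt_mul (sq_nonneg s), Real.sqrt_sq hs0.le, neg_mul]
    ring
  have hW : ∀ u : Fin d → ℝ, (∀ i, 0 < u i) →
      (∫ x : Fin d → ℝ, ‖R (u, x)‖)
        = ∏ i, Real.exp (-(a*(u i)^2)) * Real.sqrt (π/(a/(u i)^2)) := by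
    intro u hu
    have h1 : (fun x : Fin d → ℝ => ‖R (u, x)‖)
        = fun x => ∏ i, Real.exp (-(a * ((u i)^2 + (x i)^2/(u i)^2))) := by
      funext x
      rw [Real.norm_eq_abs, hR]
      exact abs_of_nonneg (Finset.prod_nonneg fun i _ => (Real.exp_pos _).le)
    rw [h1, MeasureTheory.integral_fintype_prod_volume_eq_prod
        (fun i (t:ℝ) => Real.exp (-(a * ((u i)^2 + t^2/(u i)^2))))]
    apply Finset.prod_congr rfl
    intro i _
    have hne : u i ≠ 0 := ne_of_gt (hu i)
    calc ∫ t : ℝ, Real.exp (-(a * ((u i)^2 + t^2/(u i)^2)))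
        = ∫ t : ℝ, Real.exp (-(a * (u i)^2)) * Real.exp (-(a/(u i)^2) * t^2) := by
          congr 1
          funext t
          rw [← Real.exp_add]
          congr 1
          field_simp
          ring
      _ = Real.exp (-(a * (u i)^2)) * ∫ t : ℝ, Real.exp (-(a/(u i)^2) * t^2) :=
          integral_const_mul _ _
      _ = Real.exp (-(a*(u i)^2)) * Real.sqrt (π/(a/(u i)^2)) := by
          rw [integral_gaussian]
  have hR2 : Integrable (fun u => ∫ x : Fin d → ℝ, ‖R (u, x)‖) (volume.restrict P) := by
    apply Integrable.congr ((integrableOn_pi_Ioi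
      (fun _ s => Real.exp (-(a*s^2)) * Real.sqrt (π/(a/s^2))) (fun i => hWint)))
    filter_upwards [ae_restrict_mem hPm] with u hu
    exact (hW u (fun i => hu i (mem_univ i))).symm
  have hRint : Integrable R ((volume.restrict P).prod volume) := by
    apply (integrable_prod_iff hRm.aestronglyMeasurable).mpr
    constructor
    · filter_upwards [ae_restrict_mem hPm] with u hu
      exact hfi u (fun i => hu i (mem_univ i))
    · exact hR2
  have hQint : Integrable (Function.uncurry Q) ((volume.restrict P).prod volume) := by
    apply Integrable.mono' (hRint.const_mul (M * Real.exp (-β * C)))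
      hQum.aestronglyMeasurable
    filter_upwards with p
    show ‖Q p.1 p.2‖ ≤ (M * Real.exp (-β * C)) * R p
    rw [hQ]
    simp only [Real.norm_eq_abs]
    rw [abs_mul, abs_mul, abs_of_pos (Real.exp_pos _),
      abs_of_nonneg (Finset.prod_nonneg fun i _ => (Real.exp_pos _).le)]
    have h2 : Real.exp (-β * G p.2) ≤ Real.exp (-β * C) := by
      rw [Real.exp_le_exp]
      have := hGb p.2
      nlinarith
    have hnn : (0:ℝ) ≤ ∏ i, Real.exp (-(a * ((p.1 i)^2 + (p.2 i)^2/(p.1 i)^2))) :=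
      Finset.prod_nonneg fun i _ => (Real.exp_pos _).le
    calc |φ p.2| * Real.exp (-β * G p.2) *
          ∏ i, Real.exp (-(a * ((p.1 i)^2 + (p.2 i)^2/(p.1 i)^2)))
        ≤ (M * Real.exp (-β * C)) *
          ∏ i, Real.exp (-(a * ((p.1 i)^2 + (p.2 i)^2/(p.1 i)^2))) := by
          apply mul_le_mul_of_nonneg_right ?_ hnn
          exact mul_le_mul (hφb _) h2 (Real.exp_pos _).le hM0
      _ = (M * Real.exp (-β * C)) * R p := by rw [hR]
  have hswap : ∫ u in P, ∫ x, Q u x = ∫ x, ∫ u in P, Q u x :=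
    integral_integral_swap hQint
  -- innermost evaluation via glasser
  have hxval : ∀ x : Fin d → ℝ, ∫ u in P, Q u x
      = (Real.sqrt (π/a)/2)^d * (φ x * Real.exp (-β * (lam * ∑ i, |x i| + G x))) := by
    intro x
    rw [hQ]
    simp only []
    rw [integral_const_mul, hP,
      integral_pi_Ioi (fun i (t:ℝ) => Real.exp (-(a * (t^2 + (x i)^2/t^2))))]
    have hcoord : ∀ i : Fin d, (∫ t in Ioi (0:ℝ), Real.exp (-(a * (t^2 + (x i)^2/t^2))))
        = Real.sqrt (π/a)/2 * Real.exp (-(2*a*|x i|)) := by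
      intro i
      rw [show (x i)^2 = |x i|^2 from (sq_abs (x i)).symm]
      exact glasser_s3 ha (abs_nonneg (x i))
    rw [Finset.prod_congr rfl (fun i _ => hcoord i), Finset.prod_mul_distrib,
      Finset.prod_const, ← Real.exp_sum, Finset.card_univ, Fintype.card_fin]
    have hexp : -β * (lam * ∑ i, |x i| + G x) = (-β * G x) + ∑ i, -(2*a*|x i|) := by
      have hs : ∑ i, -(2*a*|x i|) = -(2*a* ∑ i, |x i|) := by
        rw [Finset.sum_neg_distrib, ← Finset.mul_sum]
      rw [hs, ha_def]
      ring
    rw [hexp, Real.exp_add]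
    ring
  rw [hSP, hset, hinner, hswap, show (fun x : Fin d → ℝ => ∫ u in P, Q u x)
    = fun x => (Real.sqrt (π/a)/2)^d * (φ x * Real.exp (-β * (lam * ∑ i, |x i| + G x)))
    from funext hxval, integral_const_mul]

/-- Hadamard reparameterization: if (u,v) ∼ π then u ⊙ v ∼ ρ. -/
theorem hadamard_reparameterization (d : ℕ) (β lam : ℝ) (hβ : 0 < β) (hlam : 0 < lam)
    (G : (Fin d → ℝ) → ℝ) (hG : Measurable G) (C : ℝ) (hGb : ∀ x, C ≤ G x)
    (Z Zπ : ℝ)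
    (hZ : Z = ∫ x : Fin d → ℝ, Real.exp (-β * (lam * ∑ i, |x i| + G x)))
    (hZπ : Zπ = ∫ p in {p : (Fin d → ℝ) × (Fin d → ℝ) | ∀ i, 0 < p.1 i},
        (∏ i, p.1 i) *
          Real.exp (-β * (lam / 2 * ((∑ i, p.1 i ^ 2) + ∑ i, p.2 i ^ 2) +
            G (fun i => p.1 i * p.2 i))))
    (φ : (Fin d → ℝ) → ℝ) (hφm : Measurable φ) (M : ℝ) (hφb : ∀ x, |φ x| ≤ M) :
    (∫ p in {p : (Fin d → ℝ) × (Fin d → ℝ) | ∀ i, 0 < p.1 i},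
        φ (fun i => p.1 i * p.2 i) *
          ((1 / Zπ) * (∏ i, p.1 i) *
            Real.exp (-β * (lam / 2 * ((∑ i, p.1 i ^ 2) + ∑ i, p.2 i ^ 2) +
              G (fun i => p.1 i * p.2 i)))))
      = ∫ x : Fin d → ℝ, φ x * ((1 / Z) * Real.exp (-β * (lam * ∑ i, |x i| + G x))) := by
  have hM0 : 0 ≤ M := le_trans (abs_nonneg _) (hφb 0)
  set c : ℝ := Real.sqrt (π/(β*lam/2))/2 with hc_def
  have hc : 0 < c := by
    apply div_pos _ two_pos
    apply Real.sqrt_pos.mpr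
    positivity
  have hkeyφ := key_identity hβ hlam G hG C hGb φ hφm M hφb
  have hkey1 := key_identity hβ hlam G hG C hGb (fun _ => 1) measurable_const 1
    (by intro x; norm_num)
  simp only [one_mul] at hkey1
  -- Z is positive
  have hZint : Integrable (fun x : Fin d → ℝ =>
      Real.exp (-β * (lam * ∑ i, |x i| + G x))) volume := by
    have hbound : Integrable (fun x : Fin d → ℝ =>
        Real.exp (-β*C) * ∏ i, Real.exp (-(β*lam*|x i|))) volume :=
      (Integrable.fintype_prod fun _ : Fin d =>
        integrable_exp_neg_abs (by positivity : (0:ℝ) < β*lam)).const_mul _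
    apply hbound.mono' ?_ ?_
    · apply Measurable.aestronglyMeasurable
      apply Measurable.exp
      apply Measurable.const_mul
      apply Measurable.add ?_ hG
      apply Measurable.const_mul
      exact Finset.measurable_sum _ fun i _ => (measurable_pi_apply i).abs
    · filter_upwards with x
      rw [Real.norm_eq_abs, abs_of_pos (Real.exp_pos _), ← Real.exp_sum, ← Real.exp_add,
        Real.exp_le_exp]
      have hs : ∑ i, -(β*lam*|x i|) = -(β*lam* ∑ i, |x i|) := by
        rw [Finset.sum_neg_distrib, ← Finset.mul_sum]
      rw [hs]
      have h1 := hGb x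
      nlinarith
  have hne : NeZero (volume : Measure (Fin d → ℝ)) := by
    constructor
    intro h
    have h2 : (0:ENNReal) < volume (univ : Set (Fin d → ℝ)) :=
      isOpen_univ.measure_pos volume univ_nonempty
    rw [h] at h2
    simp at h2
  have hZpos : 0 < Z := by
    rw [hZ]
    exact integral_exp_pos hZint
  have hZπ_eq : Zπ = c^d * Z := by
    rw [hZπ, hZ, hc_def, ← hkey1]
  have hcd : (0:ℝ) < c^d := pow_pos hc d
  -- rearrange both sides
  have hL : (∫ p in {p : (Fin d → ℝ) × (Fin d → ℝ) | ∀ i, 0 < p.1 i},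
        φ (fun i => p.1 i * p.2 i) *
          ((1 / Zπ) * (∏ i, p.1 i) *
            Real.exp (-β * (lam / 2 * ((∑ i, p.1 i ^ 2) + ∑ i, p.2 i ^ 2) +
              G (fun i => p.1 i * p.2 i)))))
      = (1/Zπ) * ∫ p in {p : (Fin d → ℝ) × (Fin d → ℝ) | ∀ i, 0 < p.1 i},
          φ (fun i => p.1 i * p.2 i) * ((∏ i, p.1 i) *
            Real.exp (-β * (lam / 2 * ((∑ i, p.1 i ^ 2) + ∑ i, p.2 i ^ 2) +
              G (fun i => p.1 i * p.2 i)))) := by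
    rw [← integral_const_mul]
    apply integral_congr_ae
    filter_upwards with p
    ring
  have hR : (∫ x : Fin d → ℝ, φ x * ((1 / Z) * Real.exp (-β * (lam * ∑ i, |x i| + G x))))
      = (1/Z) * ∫ x : Fin d → ℝ, φ x * Real.exp (-β * (lam * ∑ i, |x i| + G x)) := by
    rw [← integral_const_mul]
    apply integral_congr_ae
    filter_upwards with x
    ring
  rw [hL, hR, hkeyφ, hZπ_eq, ← hc_def]
  field_simp
end

section
/- Under the hypotheses of the Hadamard reparameterization theorem, the normalization constants satisfy 1/Z = (1/Z_π) · (√(π/(2βλ)))ᵈ. -/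
open MeasureTheory Real Set ENNReal

lemma my_lintegral_image {s : Set ℝ} {f f' : ℝ → ℝ}
    (hs : MeasurableSet s) (hf' : ∀ x ∈ s, HasDerivWithinAt f (f' x) s x)
    (hf : Set.InjOn f s) (g : ℝ → ℝ≥0∞) :
    ∫⁻ x in f '' s, g x = ∫⁻ x in s, ENNReal.ofReal |f' x| * g (f x) := by
  simpa only [ContinuousLinearMap.det_toSpanSingleton] using
    lintegral_image_eq_lintegral_abs_det_fderiv_mul volume hs
      (fun x hx => (hf' x hx).hasFDerivWithinAt) hf g

lemma subst_inv {c : ℝ} (hc : 0 < c) (g : ℝ → ℝ≥0∞) :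
    ∫⁻ u in Ioi (0:ℝ), g u
      = ∫⁻ u in Ioi (0:ℝ), ENNReal.ofReal (c / u^2) * g (c/u) := by
  have himg : (fun u : ℝ => c / u) '' Ioi 0 = Ioi 0 := by
    apply Set.eq_of_subset_of_subset
    · rintro y ⟨u, hu, rfl⟩
      exact div_pos hc hu
    · intro y hy
      exact ⟨c / y, div_pos hc hy, by field_simp⟩
  have hder : ∀ u ∈ Ioi (0:ℝ), HasDerivWithinAt (fun u => c / u) (-(c/u^2)) (Ioi 0) u := by
    intro u hu
    have h := (hasDerivAt_inv (ne_of_gt hu)).const_mul c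
    have : c * -(u^2)⁻¹ = -(c/u^2) := by field_simp
    simpa [div_eq_mul_inv, this] using h.hasDerivWithinAt
  have hinj : Set.InjOn (fun u : ℝ => c / u) (Ioi 0) := by
    intro u hu v hv h
    have hu0 : (u:ℝ) ≠ 0 := ne_of_gt hu
    have hv0 : (v:ℝ) ≠ 0 := ne_of_gt hv
    field_simp at h
    linarith
  calc ∫⁻ u in Ioi (0:ℝ), g u = ∫⁻ u in (fun u : ℝ => c / u) '' Ioi 0, g u := by rw [himg]
    _ = ∫⁻ u in Ioi (0:ℝ), ENNReal.ofReal |(-(c/u^2))| * g (c/u) :=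
        my_lintegral_image measurableSet_Ioi hder hinj g
    _ = ∫⁻ u in Ioi (0:ℝ), ENNReal.ofReal (c / u^2) * g (c/u) := by
        apply setLIntegral_congr_fun measurableSet_Ioi
        intro u hu
        dsimp only
        rw [abs_neg, abs_of_pos (div_pos hc (pow_pos hu 2))]

lemma glasser_integrableOn {a : ℝ} (ha : 0 < a) (c : ℝ) :
    IntegrableOn (fun u => rexp (-(a*u^2 + a*c^2/u^2))) (Ioi (0:ℝ)) := by
  apply Integrable.mono ((integrable_exp_neg_mul_sq ha).integrableOn (s := Ioi 0))
  · apply Measurable.aestronglyMeasurable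
    fun_prop
  · filter_upwards [ae_restrict_mem measurableSet_Ioi] with u hu
    have hu2 : (0:ℝ) < u^2 := pow_pos hu 2
    rw [Real.norm_eq_abs, Real.norm_eq_abs, abs_of_pos (exp_pos _), abs_of_pos (exp_pos _)]
    apply exp_le_exp.2
    have : 0 ≤ a*c^2/u^2 := by positivity
    nlinarith

section
variable {a b : ℝ}

lemma glasser_pos (ha : 0 < a) (hb : 0 < b) :
    ∫⁻ u in Ioi (0:ℝ), ENNReal.ofReal (rexp (-(a*u^2 + a*b^2/u^2)))
      = ENNReal.ofReal (Real.sqrt (π/a)/2 * rexp (-(2*a*b))) := by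
  set sa := Real.sqrt a with hsa_def
  have hsa : 0 < sa := Real.sqrt_pos.2 ha
  have hsa2 : sa^2 = a := Real.sq_sqrt ha.le
  set φ : ℝ → ℝ := fun u => sa*u - sa*b/u with hφ_def
  set φ' : ℝ → ℝ := fun u => sa + sa*b/u^2 with hφ'_def
  -- derivative
  have hder : ∀ u ∈ Ioi (0:ℝ), HasDerivWithinAt φ (φ' u) (Ioi 0) u := by
    intro u hu
    have h1 : HasDerivAt (fun u : ℝ => sa * u) sa u := by
      simpa using (hasDerivAt_id u).const_mul sa
    have h2 : HasDerivAt (fun u : ℝ => sa*b/u) (-(sa*b/u^2)) u := by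
      have h := (hasDerivAt_inv (ne_of_gt hu)).const_mul (sa*b)
      have : sa*b * -(u^2)⁻¹ = -(sa*b/u^2) := by field_simp
      simpa [div_eq_mul_inv, this] using h
    have := (h1.sub h2).hasDerivWithinAt (s := Ioi 0)
    simpa [hφ_def, hφ'_def, sub_neg_eq_add, Pi.sub_def] using this
  -- injectivity
  have hinj : Set.InjOn φ (Ioi 0) := by
    intro u hu v hv h
    simp only [hφ_def] at h
    have hu0 : (u:ℝ) ≠ 0 := ne_of_gt hu
    have hv0 : (v:ℝ) ≠ 0 := ne_of_gt hv
    have key : (u - v) * (sa*(u*v) + sa*b) = 0 := by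
      field_simp at h
      nlinarith [h]
    have hpos : 0 < sa*(u*v) + sa*b := by nlinarith [mul_pos (show (0:ℝ) < u from hu) (show (0:ℝ) < v from hv), mul_pos hsa hb]
    have := mul_eq_zero.1 key
    rcases this with h' | h'
    · linarith
    · linarith
  -- surjectivity
  have himg : φ '' Ioi 0 = univ := by
    apply Set.eq_univ_of_forall
    intro y
    set sD := Real.sqrt (y^2 + 4*a*b) with hsD_def
    have hD : (0:ℝ) ≤ y^2 + 4*a*b := by positivity
    have hsD2 : sD^2 = y^2 + 4*a*b := Real.sq_sqrt hD
    have hsD0 : 0 ≤ sD := Real.sqrt_nonneg _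
    have hygt : -y < sD := by nlinarith [mul_pos ha hb]
    set u := (y + sD) / (2*sa) with hu_def
    have hu : 0 < u := by
      apply div_pos (by linarith) (by positivity)
    refine ⟨u, hu, ?_⟩
    show sa*u - sa*b/u = y
    rw [hu_def]
    have h2sa : (2*sa) ≠ 0 := by positivity
    have hys : y + sD ≠ 0 := by linarith
    field_simp
    ring_nf
    linear_combination hsD2 - 4*b*hsa2
  -- the two integrals
  set f : ℝ → ℝ≥0∞ := fun u => ENNReal.ofReal (rexp (-(a*u^2 + a*b^2/u^2))) with hf_def
  have hmeas : Measurable f := by fun_prop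
  set I := ∫⁻ u in Ioi (0:ℝ), f u with hI_def
  have hIfin : I ≠ ⊤ := by
    rw [hI_def, hf_def, ← ofReal_integral_eq_lintegral_ofReal (glasser_integrableOn ha b)
      (ae_of_all _ fun u => (exp_pos _).le)]
    exact ENNReal.ofReal_ne_top
  have hgauss : ∫⁻ s : ℝ, ENNReal.ofReal (rexp (-s^2)) = ENNReal.ofReal (Real.sqrt π) := by
    rw [← ofReal_integral_eq_lintegral_ofReal]
    · congr 1
      simpa using integral_gaussian 1
    · simpa using integrable_exp_neg_mul_sq (one_pos (α := ℝ))
    · exact ae_of_all _ fun s => (exp_pos _).le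
  have hJI : ∫⁻ u in Ioi (0:ℝ), ENNReal.ofReal ((b/u^2) * rexp (-(a*u^2 + a*b^2/u^2))) = I := by
    rw [hI_def, subst_inv hb f]
    apply setLIntegral_congr_fun measurableSet_Ioi
    intro u hu
    dsimp only
    have hu0 : (u:ℝ) ≠ 0 := ne_of_gt hu
    have hb2 : (0:ℝ) ≤ b/u^2 := by positivity
    rw [ENNReal.ofReal_mul hb2, hf_def]
    congr 2
    field_simp
    ring
  have key : ENNReal.ofReal (Real.sqrt π)
      = ENNReal.ofReal (sa * rexp (2*a*b)) * 2 * I := by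
    calc ENNReal.ofReal (Real.sqrt π) = ∫⁻ s : ℝ, ENNReal.ofReal (rexp (-s^2)) := hgauss.symm
      _ = ∫⁻ s in φ '' Ioi 0, ENNReal.ofReal (rexp (-s^2)) := by
          rw [himg, Measure.restrict_univ]
      _ = ∫⁻ u in Ioi 0, ENNReal.ofReal |φ' u| * ENNReal.ofReal (rexp (-(φ u)^2)) :=
          my_lintegral_image measurableSet_Ioi hder hinj _
      _ = ∫⁻ u in Ioi 0, ENNReal.ofReal (sa * rexp (2*a*b)) *
            (f u + ENNReal.ofReal ((b/u^2) * rexp (-(a*u^2 + a*b^2/u^2)))) := by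
          apply setLIntegral_congr_fun measurableSet_Ioi
          intro u hu
          dsimp only
          have hu0 : (u:ℝ) ≠ 0 := ne_of_gt hu
          have hu2 : (0:ℝ) < u^2 := pow_pos hu 2
          have hφsq : (φ u)^2 = a*u^2 + a*b^2/u^2 - 2*a*b := by
            simp only [hφ_def]
            field_simp
            linear_combination (u^4 + b^2 - 2*b*u^2) * hsa2
          have habs : |φ' u| = sa + sa*b/u^2 := by
            apply abs_of_pos
            show 0 < sa + sa*b/u^2
            positivity
          rw [habs, hφsq, hf_def]
          rw [← ENNReal.ofReal_add (by positivity) (by positivity),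
            ← ENNReal.ofReal_mul (by positivity), ← ENNReal.ofReal_mul (by positivity)]
          congr 1
          rw [show -(a*u^2 + a*b^2/u^2 - 2*a*b) = 2*a*b + -(a*u^2 + a*b^2/u^2) by ring,
            Real.exp_add]
          ring
      _ = ENNReal.ofReal (sa * rexp (2*a*b)) *
            (∫⁻ u in Ioi 0, (f u + ENNReal.ofReal ((b/u^2) * rexp (-(a*u^2 + a*b^2/u^2))))) := by
          rw [lintegral_const_mul' _ _ ENNReal.ofReal_ne_top]
      _ = ENNReal.ofReal (sa * rexp (2*a*b)) * (I + I) := by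
          rw [lintegral_add_left hmeas, hJI, hI_def]
      _ = ENNReal.ofReal (sa * rexp (2*a*b)) * 2 * I := by
          ring
  have hkey2 : ENNReal.ofReal (sa * rexp (2*a*b)) * 2
      * ENNReal.ofReal (Real.sqrt (π/a)/2 * rexp (-(2*a*b)))
      = ENNReal.ofReal (Real.sqrt π) := by
    rw [show (2:ℝ≥0∞) = ENNReal.ofReal 2 by simp,
      ← ENNReal.ofReal_mul (by positivity), ← ENNReal.ofReal_mul (by positivity)]
    congr 1
    have hsqrt : Real.sqrt (π/a) = Real.sqrt π / sa := Real.sqrt_div' π ha.le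
    rw [hsqrt, Real.exp_neg]
    field_simp
  have hk0 : ENNReal.ofReal (sa * rexp (2*a*b)) * 2 ≠ 0 := by
    apply mul_ne_zero _ (by norm_num)
    exact (ENNReal.ofReal_pos.2 (by positivity)).ne'
  have hktop : ENNReal.ofReal (sa * rexp (2*a*b)) * 2 ≠ ⊤ := by
    exact ENNReal.mul_ne_top ENNReal.ofReal_ne_top (by norm_num)
  have h1 := (ENNReal.eq_div_iff hk0 hktop).2 key.symm
  have h2 := (ENNReal.eq_div_iff hk0 hktop).2 hkey2
  exact h1.trans h2.symm
end

lemma glasser_lintegral {a : ℝ} (ha : 0 < a) (c : ℝ) :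
    ∫⁻ u in Ioi (0:ℝ), ENNReal.ofReal (rexp (-(a*u^2 + a*c^2/u^2)))
      = ENNReal.ofReal (Real.sqrt (π/a)/2 * rexp (-(2*a*|c|))) := by
  rcases eq_or_ne c 0 with rfl | hc
  · simp only [abs_zero, mul_zero, ne_eq, OfNat.ofNat_ne_zero, not_false_eq_true, zero_pow,
      zero_div, add_zero, Real.exp_zero, mul_one]
    rw [← ofReal_integral_eq_lintegral_ofReal]
    · congr 1
      simpa [neg_mul] using integral_gaussian_Ioi a
    · simpa [IntegrableOn] using glasser_integrableOn ha 0
    · exact ae_of_all _ fun u => (exp_pos _).le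
  · have hb : 0 < |c| := abs_pos.2 hc
    have h := glasser_pos ha hb
    simpa [sq_abs] using h

lemma glasser_integral {a : ℝ} (ha : 0 < a) (c : ℝ) :
    ∫ u in Ioi (0:ℝ), rexp (-(a*u^2 + a*c^2/u^2))
      = Real.sqrt (π/a)/2 * rexp (-(2*a*|c|)) := by
  have h := glasser_lintegral ha c
  rw [← ofReal_integral_eq_lintegral_ofReal (glasser_integrableOn ha c)
    (ae_of_all _ fun u => (exp_pos _).le)] at h
  have h1 : (0:ℝ) ≤ ∫ u in Ioi (0:ℝ), rexp (-(a*u^2 + a*c^2/u^2)) :=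
    setIntegral_nonneg measurableSet_Ioi fun u _ => (exp_pos _).le
  have h2 : (0:ℝ) ≤ Real.sqrt (π/a)/2 * rexp (-(2*a*|c|)) := by positivity
  exact (ENNReal.ofReal_eq_ofReal_iff h1 h2).1 h

lemma lintegral_comp_diag {d : ℕ} (u : Fin d → ℝ) (hu : ∀ i, 0 < u i)
    {g : (Fin d → ℝ) → ℝ≥0∞} (hg : Measurable g) :
    ∫⁻ v : Fin d → ℝ, g (fun i => u i * v i)
      = ENNReal.ofReal (∏ i, u i)⁻¹ * ∫⁻ x, g x := by
  classical
  set L := Matrix.toLin' (Matrix.diagonal u) with hL_def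
  have hL : ⇑L = fun v => fun i => u i * v i := by
    ext v i
    simp [hL_def, Matrix.toLin'_apply, Matrix.mulVec_diagonal]
  have hdet : LinearMap.det (L : (Fin d → ℝ) →ₗ[ℝ] (Fin d → ℝ)) = ∏ i, u i := by
    rw [hL_def, LinearMap.det_toLin', Matrix.det_diagonal]
  have hprod : 0 < ∏ i, u i := Finset.prod_pos fun i _ => hu i
  have hmap := Real.map_linearMap_volume_pi_eq_smul_volume_pi
    (f := (L : (Fin d → ℝ) →ₗ[ℝ] (Fin d → ℝ))) (by rw [hdet]; exact hprod.ne')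
  have hLm : Measurable (⇑L) := by
    rw [hL]
    exact measurable_pi_lambda _ fun i => by fun_prop
  calc ∫⁻ v : Fin d → ℝ, g (fun i => u i * v i) = ∫⁻ v, g (L v) := by rw [hL]
    _ = ∫⁻ x, g x ∂(Measure.map (⇑L) volume) := (lintegral_map hg hLm).symm
    _ = ENNReal.ofReal (∏ i, u i)⁻¹ * ∫⁻ x, g x := by
        rw [hmap, hdet, lintegral_smul_measure, abs_of_pos (inv_pos.2 hprod), smul_eq_mul]

lemma prod_orthant {d : ℕ} (F : Fin d → ℝ → ℝ) (hF : ∀ i, IntegrableOn (F i) (Ioi 0))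
    (hFnn : ∀ i t, 0 ≤ F i t) :
    ∫⁻ u in Set.univ.pi (fun _ : Fin d => Ioi (0:ℝ)), ENNReal.ofReal (∏ i, F i (u i))
      = ENNReal.ofReal (∏ i, ∫ t in Ioi (0:ℝ), F i t) := by
  classical
  set k : Fin d → ℝ → ℝ := fun i => (Ioi (0:ℝ)).indicator (F i) with hk_def
  have hki : ∀ i, Integrable (k i) := fun i =>
    (integrable_indicator_iff measurableSet_Ioi).2 (hF i)
  have hknn : ∀ i t, 0 ≤ k i t := fun i t => Set.indicator_nonneg (fun s _ => hFnn i s) t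
  have step1 : ∫⁻ u in Set.univ.pi (fun _ : Fin d => Ioi (0:ℝ)),
      ENNReal.ofReal (∏ i, F i (u i))
      = ∫⁻ u : Fin d → ℝ, ENNReal.ofReal (∏ i, k i (u i)) := by
    rw [← lintegral_indicator (MeasurableSet.univ_pi fun _ => measurableSet_Ioi)]
    congr 1
    ext u
    by_cases hu : u ∈ Set.univ.pi (fun _ : Fin d => Ioi (0:ℝ))
    · rw [Set.indicator_of_mem hu]
      congr 1
      apply Finset.prod_congr rfl
      intro i _
      rw [hk_def]
      simp only
      rw [Set.indicator_of_mem (hu i (Set.mem_univ i))]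
    · rw [Set.indicator_of_notMem hu]
      rw [Set.mem_pi] at hu
      push_neg at hu
      obtain ⟨i, _, hi⟩ := hu
      have : k i (u i) = 0 := by rw [hk_def]; simp only; rw [Set.indicator_of_notMem hi]
      rw [Finset.prod_eq_zero (Finset.mem_univ i) this, ENNReal.ofReal_zero]
  rw [step1, volume_pi, ← ofReal_integral_eq_lintegral_ofReal (Integrable.fin_nat_prod hki)
    (ae_of_all _ fun u => Finset.prod_nonneg fun i _ => hknn i (u i)),
    integral_fin_nat_prod_eq_prod]
  congr 1
  apply Finset.prod_congr rfl
  intro i _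
  rw [hk_def]
  simp only
  rw [integral_indicator measurableSet_Ioi]

section main
variable {d : ℕ} {β lam : ℝ}

theorem Zpi_eq (hβ : 0 < β) (hlam : 0 < lam)
    (G : (Fin d → ℝ) → ℝ) (hG : Measurable G) :
    (∫⁻ p in {p : (Fin d → ℝ) × (Fin d → ℝ) | ∀ i, 0 < p.1 i},
        ENNReal.ofReal ((∏ i, p.1 i) *
          rexp (-β * (lam / 2 * ((∑ i, p.1 i ^ 2) + ∑ i, p.2 i ^ 2) +
            G (fun i => p.1 i * p.2 i)))))
      = ENNReal.ofReal ((Real.sqrt (π/(β*lam/2))/2)^d) *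
        ∫⁻ x : Fin d → ℝ, ENNReal.ofReal (rexp (-β * (lam * ∑ i, |x i| + G x))) := by
  classical
  set a := β*lam/2 with ha_def
  have ha : 0 < a := by positivity
  set c := Real.sqrt (π/a)/2 with hc_def
  set T : Set (Fin d → ℝ) := Set.univ.pi fun _ : Fin d => Ioi (0:ℝ) with hT_def
  have hT : MeasurableSet T := MeasurableSet.univ_pi fun _ => measurableSet_Ioi
  set H : (Fin d → ℝ) → (Fin d → ℝ) → ℝ≥0∞ := fun u x =>
    ENNReal.ofReal (rexp (-(a * ∑ i, (u i)^2 + a * ∑ i, (x i)^2/(u i)^2 + β * G x)))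
    with hH_def
  have hHm : Measurable (fun p : (Fin d → ℝ) × (Fin d → ℝ) => H p.1 p.2) := by
    apply Measurable.ennreal_ofReal
    apply Measurable.exp
    apply Measurable.neg
    have h1 : Measurable fun p : (Fin d → ℝ) × (Fin d → ℝ) => ∑ i, (p.1 i)^2 :=
      Finset.measurable_sum _ fun i _ => (((measurable_pi_apply i).comp measurable_fst).pow_const 2)
    have h2 : Measurable fun p : (Fin d → ℝ) × (Fin d → ℝ) => ∑ i, (p.2 i)^2/(p.1 i)^2 :=
      Finset.measurable_sum _ fun i _ =>
        (((measurable_pi_apply i).comp measurable_snd).pow_const 2).div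
          (((measurable_pi_apply i).comp measurable_fst).pow_const 2)
    exact ((h1.const_mul a).add (h2.const_mul a)).add ((hG.comp measurable_snd).const_mul β)
  have hFm : Measurable (fun p : (Fin d → ℝ) × (Fin d → ℝ) => ENNReal.ofReal ((∏ i, p.1 i) *
      rexp (-β * (lam / 2 * ((∑ i, p.1 i ^ 2) + ∑ i, p.2 i ^ 2) +
        G (fun i => p.1 i * p.2 i))))) := by
    apply Measurable.ennreal_ofReal
    have hp : Measurable fun p : (Fin d → ℝ) × (Fin d → ℝ) => ∏ i, p.1 i :=
      Finset.measurable_prod _ fun i _ => (measurable_pi_apply i).comp measurable_fst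
    have h1 : Measurable fun p : (Fin d → ℝ) × (Fin d → ℝ) => ∑ i, (p.1 i)^2 :=
      Finset.measurable_sum _ fun i _ => (((measurable_pi_apply i).comp measurable_fst).pow_const 2)
    have h2 : Measurable fun p : (Fin d → ℝ) × (Fin d → ℝ) => ∑ i, (p.2 i)^2 :=
      Finset.measurable_sum _ fun i _ => (((measurable_pi_apply i).comp measurable_snd).pow_const 2)
    have hg : Measurable fun p : (Fin d → ℝ) × (Fin d → ℝ) => G (fun i => p.1 i * p.2 i) :=
      hG.comp (measurable_pi_lambda _ fun i =>
        ((measurable_pi_apply i).comp measurable_fst).mul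
          ((measurable_pi_apply i).comp measurable_snd))
    exact hp.mul ((((h1.add h2).const_mul (lam/2)).add hg).const_mul (-β)).exp
  have hSrw : {p : (Fin d → ℝ) × (Fin d → ℝ) | ∀ i, 0 < p.1 i} = T ×ˢ (univ : Set (Fin d → ℝ)) := by
    ext p; simp [hT_def, Set.mem_pi]
  have hrestr : ((volume : Measure ((Fin d → ℝ) × (Fin d → ℝ))).restrict (T ×ˢ (univ : Set (Fin d → ℝ))))
      = ((volume : Measure (Fin d → ℝ)).restrict T).prod volume := by
    rw [Measure.volume_eq_prod, ← Measure.prod_restrict, Measure.restrict_univ]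
  calc (∫⁻ p in {p : (Fin d → ℝ) × (Fin d → ℝ) | ∀ i, 0 < p.1 i},
        ENNReal.ofReal ((∏ i, p.1 i) *
          rexp (-β * (lam / 2 * ((∑ i, p.1 i ^ 2) + ∑ i, p.2 i ^ 2) +
            G (fun i => p.1 i * p.2 i)))))
      = ∫⁻ p : (Fin d → ℝ) × (Fin d → ℝ), ENNReal.ofReal ((∏ i, p.1 i) *
          rexp (-β * (lam / 2 * ((∑ i, p.1 i ^ 2) + ∑ i, p.2 i ^ 2) +
            G (fun i => p.1 i * p.2 i))))
          ∂(((volume : Measure (Fin d → ℝ)).restrict T).prod volume) := by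
        rw [hSrw, hrestr]
    _ = ∫⁻ u in T, (∫⁻ v : Fin d → ℝ, ENNReal.ofReal ((∏ i, u i) *
          rexp (-β * (lam / 2 * ((∑ i, u i ^ 2) + ∑ i, v i ^ 2) +
            G (fun i => u i * v i)))) ∂volume) ∂(volume : Measure (Fin d → ℝ)) :=
        lintegral_prod _ hFm.aemeasurable
    _ = ∫⁻ u in T, (∫⁻ x : Fin d → ℝ, H u x ∂volume) ∂(volume : Measure (Fin d → ℝ)) := by
        apply setLIntegral_congr_fun hT
        intro u hu
        have hu' : ∀ i, 0 < u i := fun i => hu i (Set.mem_univ i)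
        have hup : 0 < ∏ i, u i := Finset.prod_pos fun i _ => hu' i
        set g : (Fin d → ℝ) → ℝ≥0∞ := fun x => ENNReal.ofReal ((∏ i, u i) *
          rexp (-β * (lam / 2 * ((∑ i, u i ^ 2) + ∑ i, (x i / u i) ^ 2) + G x))) with hg_def
        have hgm : Measurable g := by
          apply Measurable.ennreal_ofReal
          have h2 : Measurable fun x : Fin d → ℝ => ∑ i, (x i / u i)^2 :=
            Finset.measurable_sum _ fun i _ => by fun_prop
          exact measurable_const.mul
            (((((measurable_const.add h2).const_mul (lam/2))).add hG).const_mul (-β)).exp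
        have step1 : ∀ v : Fin d → ℝ, ENNReal.ofReal ((∏ i, u i) *
            rexp (-β * (lam / 2 * ((∑ i, u i ^ 2) + ∑ i, v i ^ 2) +
              G (fun i => u i * v i)))) = g (fun i => u i * v i) := by
          intro v
          rw [hg_def]
          have hsum : ∀ i : Fin d, ((fun i => u i * v i) i / u i)^2 = (v i)^2 := fun i => by
            simp only
            rw [mul_div_cancel_left₀ _ (hu' i).ne']
          congr 3
          rw [Finset.sum_congr rfl fun i _ => hsum i]
        calc (∫⁻ v : Fin d → ℝ, ENNReal.ofReal ((∏ i, u i) *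
              rexp (-β * (lam / 2 * ((∑ i, u i ^ 2) + ∑ i, v i ^ 2) +
                G (fun i => u i * v i)))) ∂volume)
            = ∫⁻ v : Fin d → ℝ, g (fun i => u i * v i) ∂volume := by
              exact lintegral_congr step1
          _ = ENNReal.ofReal (∏ i, u i)⁻¹ * ∫⁻ x, g x := lintegral_comp_diag u hu' hgm
          _ = ∫⁻ x : Fin d → ℝ, H u x ∂volume := by
              rw [← lintegral_const_mul' _ _ ENNReal.ofReal_ne_top]
              apply lintegral_congr
              intro x
              rw [hg_def, hH_def]
              simp only
              rw [← ENNReal.ofReal_mul (by positivity), inv_mul_cancel_left₀ hup.ne']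
              congr 1
              rw [ha_def]
              have : ∑ i, (x i / u i)^2 = ∑ i, (x i)^2/(u i)^2 :=
                Finset.sum_congr rfl fun i _ => div_pow _ _ 2
              rw [this]
              ring
    _ = ∫⁻ p : (Fin d → ℝ) × (Fin d → ℝ), H p.1 p.2 ∂(((volume : Measure (Fin d → ℝ)).restrict T).prod volume) :=
        (lintegral_prod _ hHm.aemeasurable).symm
    _ = ∫⁻ x : Fin d → ℝ, (∫⁻ u in T, H u x ∂volume) ∂(volume : Measure (Fin d → ℝ)) :=
        lintegral_prod_symm _ hHm.aemeasurable
    _ = ∫⁻ x : Fin d → ℝ, ENNReal.ofReal (c^d * rexp (-β * (lam * ∑ i, |x i| + G x))) ∂volume := by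
        apply lintegral_congr
        intro x
        have hpt : ∀ u : Fin d → ℝ, H u x = ENNReal.ofReal (∏ i, rexp (-(a*(u i)^2 + a*(x i)^2/(u i)^2)))
            * ENNReal.ofReal (rexp (-(β * G x))) := by
          intro u
          rw [hH_def]
          simp only
          rw [← ENNReal.ofReal_mul (by positivity)]
          congr 1
          rw [← Real.exp_sum, ← Real.exp_add]
          congr 1
          have : ∑ i, -(a*(u i)^2 + a*(x i)^2/(u i)^2)
              = -(a*∑ i, (u i)^2 + a*∑ i, (x i)^2/(u i)^2) := by
            simp only [mul_div_assoc]
            rw [Finset.sum_neg_distrib, Finset.sum_add_distrib, ← Finset.mul_sum, ← Finset.mul_sum]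
          rw [this]
          ring
        calc (∫⁻ u in T, H u x ∂volume)
            = (∫⁻ u in T, ENNReal.ofReal (∏ i, rexp (-(a*(u i)^2 + a*(x i)^2/(u i)^2))) ∂volume)
              * ENNReal.ofReal (rexp (-(β * G x))) := by
              rw [← lintegral_mul_const' _ _ ENNReal.ofReal_ne_top]
              exact setLIntegral_congr_fun hT (fun u _ => hpt u)
          _ = ENNReal.ofReal (∏ i, (c * rexp (-(2*a*|x i|)))) * ENNReal.ofReal (rexp (-(β * G x))) := by
              rw [prod_orthant _ (fun i => glasser_integrableOn ha (x i))
                (fun i t => (exp_pos _).le)]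
              congr 2
              exact Finset.prod_congr rfl fun i _ => (glasser_integral ha (x i)).symm ▸ rfl
          _ = ENNReal.ofReal (c^d * rexp (-β * (lam * ∑ i, |x i| + G x))) := by
              rw [← ENNReal.ofReal_mul (by positivity)]
              congr 1
              rw [Finset.prod_mul_distrib, Finset.prod_const, ← Real.exp_sum,
                Finset.card_univ, Fintype.card_fin]
              rw [mul_assoc, ← Real.exp_add]
              congr 1
              rw [Finset.sum_neg_distrib, ← Finset.mul_sum, ha_def]
              ring
    _ = ENNReal.ofReal (c^d) *
        ∫⁻ x : Fin d → ℝ, ENNReal.ofReal (rexp (-β * (lam * ∑ i, |x i| + G x))) ∂volume := by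
        rw [← lintegral_const_mul' _ _ ENNReal.ofReal_ne_top]
        exact lintegral_congr fun x => by
          rw [← ENNReal.ofReal_mul (by positivity : (0:ℝ) ≤ c^d)]
end main

/-- Relation between the normalization constants of ρ and π. -/
theorem normalization_constants (d : ℕ) (β lam : ℝ) (hβ : 0 < β) (hlam : 0 < lam)
    (G : (Fin d → ℝ) → ℝ) (hG : Measurable G) (C : ℝ) (hGb : ∀ x, C ≤ G x)
    (Z Zπ : ℝ)
    (hZ : Z = ∫ x : Fin d → ℝ, Real.exp (-β * (lam * ∑ i, |x i| + G x)))
    (hZπ : Zπ = ∫ p in {p : (Fin d → ℝ) × (Fin d → ℝ) | ∀ i, 0 < p.1 i},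
        (∏ i, p.1 i) *
          Real.exp (-β * (lam / 2 * ((∑ i, p.1 i ^ 2) + ∑ i, p.2 i ^ 2) +
            G (fun i => p.1 i * p.2 i)))) :
    1 / Z = (1 / Zπ) * (Real.sqrt (Real.pi / (2 * β * lam))) ^ d := by
  classical
  have hS : MeasurableSet {p : (Fin d → ℝ) × (Fin d → ℝ) | ∀ i, 0 < p.1 i} := by
    have : {p : (Fin d → ℝ) × (Fin d → ℝ) | ∀ i, 0 < p.1 i}
        = Prod.fst ⁻¹' (Set.univ.pi fun _ : Fin d => Ioi (0:ℝ)) := by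
      ext p; simp [Set.mem_pi]
    rw [this]
    exact (MeasurableSet.univ_pi fun _ => measurableSet_Ioi).preimage measurable_fst
  have hMz : Measurable fun x : Fin d → ℝ => rexp (-β * (lam * ∑ i, |x i| + G x)) := by
    have hsum : Measurable fun x : Fin d → ℝ => ∑ i, |x i| :=
      Finset.measurable_sum _ fun i _ => (measurable_pi_apply i).abs
    exact (((hsum.const_mul lam).add hG).const_mul (-β)).exp
  have hMπ : Measurable fun p : (Fin d → ℝ) × (Fin d → ℝ) => (∏ i, p.1 i) *
      rexp (-β * (lam / 2 * ((∑ i, p.1 i ^ 2) + ∑ i, p.2 i ^ 2) +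
        G (fun i => p.1 i * p.2 i))) := by
    have hp : Measurable fun p : (Fin d → ℝ) × (Fin d → ℝ) => ∏ i, p.1 i :=
      Finset.measurable_prod _ fun i _ => (measurable_pi_apply i).comp measurable_fst
    have h1 : Measurable fun p : (Fin d → ℝ) × (Fin d → ℝ) => ∑ i, (p.1 i)^2 :=
      Finset.measurable_sum _ fun i _ => (((measurable_pi_apply i).comp measurable_fst).pow_const 2)
    have h2 : Measurable fun p : (Fin d → ℝ) × (Fin d → ℝ) => ∑ i, (p.2 i)^2 :=
      Finset.measurable_sum _ fun i _ => (((measurable_pi_apply i).comp measurable_snd).pow_const 2)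
    have hg : Measurable fun p : (Fin d → ℝ) × (Fin d → ℝ) => G (fun i => p.1 i * p.2 i) :=
      hG.comp (measurable_pi_lambda _ fun i =>
        ((measurable_pi_apply i).comp measurable_fst).mul
          ((measurable_pi_apply i).comp measurable_snd))
    exact hp.mul ((((h1.add h2).const_mul (lam/2)).add hg).const_mul (-β)).exp
  have hZL : Z = (∫⁻ x : Fin d → ℝ,
      ENNReal.ofReal (rexp (-β * (lam * ∑ i, |x i| + G x)))).toReal := by
    rw [hZ, integral_eq_lintegral_of_nonneg_ae (ae_of_all _ fun x => (exp_pos _).le)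
      hMz.aestronglyMeasurable]
  have hZπL : Zπ = (∫⁻ p in {p : (Fin d → ℝ) × (Fin d → ℝ) | ∀ i, 0 < p.1 i},
      ENNReal.ofReal ((∏ i, p.1 i) *
        rexp (-β * (lam / 2 * ((∑ i, p.1 i ^ 2) + ∑ i, p.2 i ^ 2) +
          G (fun i => p.1 i * p.2 i))))).toReal := by
    rw [hZπ, integral_eq_lintegral_of_nonneg_ae ?_ hMπ.aestronglyMeasurable]
    apply ae_restrict_of_forall_mem hS
    intro p hp
    exact mul_nonneg (Finset.prod_nonneg fun i _ => (hp i).le) (exp_pos _).le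
  have hkey := Zpi_eq hβ hlam G hG
  have hq_eq : Real.sqrt (π/(β*lam/2))/2 = Real.sqrt (π/(2*β*lam)) := by
    have h4 : π/(2*β*lam) = (π/(β*lam/2))/(2^2) := by field_simp
    rw [h4]
    conv_rhs => rw [Real.sqrt_div' _ (by norm_num : (0:ℝ) ≤ (2:ℝ)^2),
      Real.sqrt_sq (by norm_num : (0:ℝ) ≤ 2)]
  have hZπ_val : Zπ = (Real.sqrt (π/(2*β*lam)))^d * Z := by
    rw [hZπL, hZL, hkey, ENNReal.toReal_mul, ENNReal.toReal_ofReal (by positivity), hq_eq]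
  have hqpos : (0:ℝ) < (Real.sqrt (π/(2*β*lam)))^d :=
    pow_pos (Real.sqrt_pos.2 (by positivity)) d
  rcases eq_or_ne Z 0 with hZ0 | hZ0
  · rw [hZπ_val, hZ0, mul_zero]
    simp
  · rw [hZπ_val]
    field_simp
end

section
/- Let λ, β > 0, d ∈ ℕ, and let G : ℝᵈ → ℝ be C¹ with ‖∇G‖_∞ ≤ B and xᵀ∇G(x) ≥ -K for all x. If Δt < λ/B², then the implicit-explicit scheme (1+λΔt)u^{k+1} - Δt/(β u^{k+1}) = uᵏ - Δt vᵏ⊙∇G(uᵏ⊙vᵏ) + √(2/β) ΔW¹ₖ, (1+λΔt)v^{k+1} = vᵏ - Δt uᵏ⊙∇G(uᵏ⊙vᵏ) + √(2/β) ΔW²ₖ (with ΔWⁱₖ ∼ N(0, Δt·Id_d) independent of the past) satisfies the drift condition E[V(x^{k+1}) | xᵏ] ≤ α V(xᵏ) + R with V(u,v) = 1 + ‖(u,v)‖², α = (1 + Δt²B²)/(1 + λΔt)² < 1, and R = (1-α) + 4KΔt/(1+λΔt)² + (4(1+Δtλ)d + 4d)Δt/(β(1+λΔt)²). -/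
open MeasureTheory ProbabilityTheory
open scoped ENNReal NNReal Real

section GaussHelpers
open Real

private lemma exp_deriv_aux' (b x : ℝ) :
    HasDerivAt (fun y : ℝ => Real.exp (-b * y ^ 2)) (Real.exp (-b * x ^ 2) * (-b * (2 * x))) x := by
  have h1 : HasDerivAt (fun y : ℝ => -b * y ^ 2) (-b * (2 * x)) x := by
    simpa using (hasDerivAt_pow 2 x).const_mul (-b)
  simpa using h1.exp

private lemma int_x_exp' (b : ℝ) (hb : 0 < b) : ∫ x : ℝ, x * Real.exp (-b * x ^ 2) = 0 := by
  have hd : ∀ x : ℝ, HasDerivAt (fun y : ℝ => -(2 * b)⁻¹ * Real.exp (-b * y ^ 2))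
      (x * Real.exp (-b * x ^ 2)) x := by
    intro x
    have := (exp_deriv_aux' b x).const_mul (-(2 * b)⁻¹)
    refine this.congr_deriv ?_
    field_simp
  have hf' : Integrable (fun x : ℝ => x * Real.exp (-b * x ^ 2)) := by
    have := integrable_rpow_mul_exp_neg_mul_sq hb (by norm_num : (-1 : ℝ) < 1)
    simpa [Real.rpow_one] using this
  have hf : Integrable (fun x : ℝ => -(2 * b)⁻¹ * Real.exp (-b * x ^ 2)) :=
    (integrable_exp_neg_mul_sq hb).const_mul _
  exact integral_eq_zero_of_hasDerivAt_of_integrable hd hf' hf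

private lemma int_sq_exp_aux' (b : ℝ) (hb : 0 < b) :
    Integrable (fun x : ℝ => x ^ 2 * Real.exp (-b * x ^ 2)) := by
  have := integrable_rpow_mul_exp_neg_mul_sq hb (by norm_num : (-1 : ℝ) < 2)
  have h2 : ∀ x : ℝ, x ^ (2 : ℝ) = x ^ (2 : ℕ) := fun x => by
    rw [show (2 : ℝ) = ((2 : ℕ) : ℝ) by norm_num, Real.rpow_natCast]
  simpa [h2] using this

private lemma int_sq_exp' (b : ℝ) (hb : 0 < b) :
    ∫ x : ℝ, x ^ 2 * Real.exp (-b * x ^ 2) = Real.sqrt (π / b) / (2 * b) := by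
  have hd : ∀ x : ℝ, HasDerivAt (fun y : ℝ => y * Real.exp (-b * y ^ 2))
      (Real.exp (-b * x ^ 2) - 2 * b * (x ^ 2 * Real.exp (-b * x ^ 2))) x := by
    intro x
    have := (hasDerivAt_id x).mul (exp_deriv_aux' b x)
    refine this.congr_deriv ?_
    simp only [id]
    ring
  have hI0 := integrable_exp_neg_mul_sq hb
  have hI2 := int_sq_exp_aux' b hb
  have hf' : Integrable (fun x : ℝ =>
      Real.exp (-b * x ^ 2) - 2 * b * (x ^ 2 * Real.exp (-b * x ^ 2))) :=
    hI0.sub (hI2.const_mul _)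
  have hf : Integrable (fun x : ℝ => x * Real.exp (-b * x ^ 2)) := by
    have := integrable_rpow_mul_exp_neg_mul_sq hb (by norm_num : (-1 : ℝ) < 1)
    simpa [Real.rpow_one] using this
  have h0 := integral_eq_zero_of_hasDerivAt_of_integrable hd hf' hf
  rw [integral_sub hI0 (hI2.const_mul _), integral_const_mul, integral_gaussian] at h0
  have hb' : (2 : ℝ) * b ≠ 0 := by positivity
  field_simp at h0 ⊢
  linarith

variable {Δt : ℝ}

private lemma pdf_eq' (hΔt : 0 < Δt) (x : ℝ) :
    gaussianPDFReal 0 Δt.toNNReal x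
      = (Real.sqrt (2 * π * Δt))⁻¹ * Real.exp (-(2 * Δt)⁻¹ * x ^ 2) := by
  rw [gaussianPDFReal, Real.coe_toNNReal _ hΔt.le, sub_zero]
  have h : -x ^ 2 / (2 * Δt) = -(2 * Δt)⁻¹ * x ^ 2 := by
    field_simp
  rw [h]

private lemma int_gauss' (hΔt : 0 < Δt) (g : ℝ → ℝ) :
    ∫ x, g x ∂(gaussianReal 0 Δt.toNNReal) = ∫ x, gaussianPDFReal 0 Δt.toNNReal x * g x := by
  have hv : Δt.toNNReal ≠ 0 := by
    simp [Real.toNNReal_eq_zero, not_le, hΔt]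
  rw [gaussianReal_of_var_ne_zero _ hv]
  have hm : Measurable fun x => (gaussianPDFReal 0 Δt.toNNReal x).toNNReal :=
    (measurable_gaussianPDFReal _ _).real_toNNReal
  have h : volume.withDensity (gaussianPDF 0 Δt.toNNReal)
      = volume.withDensity (fun x => ((gaussianPDFReal 0 Δt.toNNReal x).toNNReal : ℝ≥0∞)) := rfl
  rw [h, integral_withDensity_eq_integral_smul hm]
  congr 1 with x
  rw [NNReal.smul_def, smul_eq_mul, Real.coe_toNNReal _ (gaussianPDFReal_nonneg _ _ _)]

private lemma integrable_gauss_iff' (hΔt : 0 < Δt) (g : ℝ → ℝ) :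
    Integrable g (gaussianReal 0 Δt.toNNReal)
      ↔ Integrable (fun x => g x * gaussianPDFReal 0 Δt.toNNReal x) := by
  have hv : Δt.toNNReal ≠ 0 := by
    simp [Real.toNNReal_eq_zero, not_le, hΔt]
  rw [gaussianReal_of_var_ne_zero _ hv]
  rw [integrable_withDensity_iff (measurable_gaussianPDF _ _)
    (ae_of_all _ fun x => ENNReal.ofReal_lt_top)]
  apply integrable_congr
  filter_upwards with x
  rw [gaussianPDF, ENNReal.toReal_ofReal (gaussianPDFReal_nonneg _ _ _)]

private lemma norm_const' (hΔt : 0 < Δt) :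
    (Real.sqrt (2 * π * Δt))⁻¹ * Real.sqrt (π / (2 * Δt)⁻¹) = 1 := by
  rw [show π / (2 * Δt)⁻¹ = 2 * π * Δt by field_simp]
  exact inv_mul_cancel₀ (by positivity)

private lemma gauss_mean' (hΔt : 0 < Δt) : ∫ x, x ∂(gaussianReal 0 Δt.toNNReal) = 0 := by
  rw [int_gauss' hΔt]
  have h : ∀ x : ℝ, gaussianPDFReal 0 Δt.toNNReal x * x
      = (Real.sqrt (2 * π * Δt))⁻¹ * (x * Real.exp (-(2 * Δt)⁻¹ * x ^ 2)) := by
    intro x; rw [pdf_eq' hΔt]; ring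
  simp_rw [h]
  rw [integral_const_mul, int_x_exp' _ (by positivity), mul_zero]

private lemma gauss_sq' (hΔt : 0 < Δt) : ∫ x, x ^ 2 ∂(gaussianReal 0 Δt.toNNReal) = Δt := by
  rw [int_gauss' hΔt]
  have h : ∀ x : ℝ, gaussianPDFReal 0 Δt.toNNReal x * x ^ 2
      = (Real.sqrt (2 * π * Δt))⁻¹ * (x ^ 2 * Real.exp (-(2 * Δt)⁻¹ * x ^ 2)) := by
    intro x; rw [pdf_eq' hΔt]; ring
  simp_rw [h]
  rw [integral_const_mul, int_sq_exp' _ (by positivity)]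
  rw [show (Real.sqrt (2 * π * Δt))⁻¹ * (Real.sqrt (π / (2 * Δt)⁻¹) / (2 * (2 * Δt)⁻¹))
      = ((Real.sqrt (2 * π * Δt))⁻¹ * Real.sqrt (π / (2 * Δt)⁻¹)) * (2 * (2 * Δt)⁻¹)⁻¹ by ring]
  rw [norm_const' hΔt]
  field_simp

private lemma gauss_int_id' (hΔt : 0 < Δt) :
    Integrable (fun x => x) (gaussianReal 0 Δt.toNNReal) := by
  rw [integrable_gauss_iff' hΔt]
  have h : ∀ x : ℝ, x * gaussianPDFReal 0 Δt.toNNReal x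
      = (Real.sqrt (2 * π * Δt))⁻¹ * (x * Real.exp (-(2 * Δt)⁻¹ * x ^ 2)) := by
    intro x; rw [pdf_eq' hΔt]; ring
  simp_rw [h]
  refine Integrable.const_mul ?_ _
  have := integrable_rpow_mul_exp_neg_mul_sq (b := (2 * Δt)⁻¹) (by positivity)
    (by norm_num : (-1 : ℝ) < 1)
  simpa [Real.rpow_one] using this

private lemma gauss_int_sq' (hΔt : 0 < Δt) :
    Integrable (fun x => x ^ 2) (gaussianReal 0 Δt.toNNReal) := by
  rw [integrable_gauss_iff' hΔt]
  have h : ∀ x : ℝ, x ^ 2 * gaussianPDFReal 0 Δt.toNNReal x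
      = (Real.sqrt (2 * π * Δt))⁻¹ * (x ^ 2 * Real.exp (-(2 * Δt)⁻¹ * x ^ 2)) := by
    intro x; rw [pdf_eq' hΔt]; ring
  simp_rw [h]
  exact (int_sq_exp_aux' _ (by positivity)).const_mul _

private lemma gauss_affine_int' (hΔt : 0 < Δt) (A s : ℝ) :
    Integrable (fun x => (A + s * x) ^ 2) (gaussianReal 0 Δt.toNNReal) := by
  have h : ∀ x : ℝ, (A + s * x) ^ 2 = A ^ 2 + 2 * A * s * x + s ^ 2 * x ^ 2 := by
    intro x; ring
  simp_rw [h]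
  exact ((integrable_const _).add ((gauss_int_id' hΔt).const_mul _)).add
    ((gauss_int_sq' hΔt).const_mul _)

private lemma gauss_affine_eq' (hΔt : 0 < Δt) (A s : ℝ) :
    ∫ x, (A + s * x) ^ 2 ∂(gaussianReal 0 Δt.toNNReal) = A ^ 2 + s ^ 2 * Δt := by
  have h : ∀ x : ℝ, (A + s * x) ^ 2 = A ^ 2 + 2 * A * s * x + s ^ 2 * x ^ 2 := by
    intro x; ring
  simp_rw [h]
  have h1 : Integrable (fun x : ℝ => A ^ 2 + 2 * A * s * x) (gaussianReal 0 Δt.toNNReal) :=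
    (integrable_const _).add ((gauss_int_id' hΔt).const_mul _)
  have h2 : Integrable (fun x : ℝ => s ^ 2 * x ^ 2) (gaussianReal 0 Δt.toNNReal) :=
    (gauss_int_sq' hΔt).const_mul _
  rw [integral_add h1 h2,
    integral_add (integrable_const _) ((gauss_int_id' hΔt).const_mul _),
    integral_const_mul, integral_const_mul, gauss_mean' hΔt, gauss_sq' hΔt,
    integral_const]
  simp

private lemma omega_affine_int' {Ωs : Type*} [MeasureSpace Ωs] (hΔt : 0 < Δt)
    {W : Ωs → ℝ} (hm : Measurable W)
    (hlaw : Measure.map W ℙ = gaussianReal 0 Δt.toNNReal) (A s : ℝ) :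
    Integrable (fun ω => (A + s * W ω) ^ 2) ℙ := by
  have hG : Integrable (fun x => (A + s * x) ^ 2) (Measure.map W ℙ) := by
    rw [hlaw]; exact gauss_affine_int' hΔt A s
  have hsm : AEStronglyMeasurable (fun x : ℝ => (A + s * x) ^ 2) (Measure.map W ℙ) :=
    (by continuity : Continuous fun x : ℝ => (A + s * x) ^ 2).aestronglyMeasurable
  exact (integrable_map_measure hsm hm.aemeasurable).mp hG

private lemma omega_affine_eq' {Ωs : Type*} [MeasureSpace Ωs] (hΔt : 0 < Δt)
    {W : Ωs → ℝ} (hm : Measurable W)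
    (hlaw : Measure.map W ℙ = gaussianReal 0 Δt.toNNReal) (A s : ℝ) :
    ∫ ω, (A + s * W ω) ^ 2 ∂(ℙ : Measure Ωs) = A ^ 2 + s ^ 2 * Δt := by
  have hsm : AEStronglyMeasurable (fun x : ℝ => (A + s * x) ^ 2) (Measure.map W ℙ) :=
    (by continuity : Continuous fun x : ℝ => (A + s * x) ^ 2).aestronglyMeasurable
  rw [← integral_map hm.aemeasurable hsm, hlaw, gauss_affine_eq' hΔt A s]

end GaussHelpers

set_option maxHeartbeats 2000000 in
/-- Drift (Lyapunov) condition for one step of the implicit-explicit scheme: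
conditioning on the current state (u,v) (so it is deterministic and the noise
increments are fresh Gaussians), E[V(x^{k+1})] ≤ α V(xᵏ) + R and α < 1. -/
theorem discrete_drift_condition {Ωs : Type*} [MeasureSpace Ωs]
    [IsProbabilityMeasure (ℙ : Measure Ωs)]
    (d : ℕ) (lam β Δt B K : ℝ) (hlam : 0 < lam) (hβ : 0 < β) (hΔt : 0 < Δt)
    (hB : 0 ≤ B) (hstep : Δt < lam / B ^ 2)
    (G : (Fin d → ℝ) → ℝ) (G' : (Fin d → ℝ) → Fin d → ℝ)
    (hGdiff : ∀ x, HasFDerivAt G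
      (∑ i, G' x i • (ContinuousLinearMap.proj i : (Fin d → ℝ) →L[ℝ] ℝ)) x)
    (hGB : ∀ x i, |G' x i| ≤ B)
    (hGK : ∀ x, -K ≤ ∑ i, x i * G' x i)
    (u v : Fin d → ℝ) (hu : ∀ i, 0 < u i)
    (W1 W2 : Ωs → Fin d → ℝ)
    (hmeas1 : ∀ i, Measurable fun ω => W1 ω i)
    (hmeas2 : ∀ i, Measurable fun ω => W2 ω i)
    (hlaw1 : ∀ i, Measure.map (fun ω => W1 ω i) ℙ = gaussianReal 0 Δt.toNNReal)
    (hlaw2 : ∀ i, Measure.map (fun ω => W2 ω i) ℙ = gaussianReal 0 Δt.toNNReal)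
    (hindep : iIndepFun
      (fun j : Fin d ⊕ Fin d =>
        Sum.elim (fun i ω => W1 ω i) (fun i ω => W2 ω i) j) ℙ)
    (U V : Ωs → Fin d → ℝ) (hU : ∀ ω i, 0 < U ω i)
    (heq1 : ∀ ω i, (1 + lam * Δt) * U ω i - Δt / (β * U ω i)
      = u i - Δt * (v i * G' (fun j => u j * v j) i) + Real.sqrt (2 / β) * W1 ω i)
    (heq2 : ∀ ω i, (1 + lam * Δt) * V ω i
      = v i - Δt * (u i * G' (fun j => u j * v j) i) + Real.sqrt (2 / β) * W2 ω i) :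
    (1 + Δt ^ 2 * B ^ 2) / (1 + lam * Δt) ^ 2 < 1 ∧
      (∫ ω, (1 + (∑ i, U ω i ^ 2) + ∑ i, V ω i ^ 2)) ≤
        ((1 + Δt ^ 2 * B ^ 2) / (1 + lam * Δt) ^ 2) *
            (1 + (∑ i, u i ^ 2) + ∑ i, v i ^ 2)
          + ((1 - (1 + Δt ^ 2 * B ^ 2) / (1 + lam * Δt) ^ 2)
            + 4 * K * Δt / (1 + lam * Δt) ^ 2
            + (4 * (1 + Δt * lam) * d + 4 * d) / (β * (1 + lam * Δt) ^ 2) * Δt) := by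
  have hβne : β ≠ 0 := ne_of_gt hβ
  obtain ⟨c, hcdef⟩ : ∃ c : ℝ, c = 1 + lam * Δt := ⟨_, rfl⟩
  have hc : 1 < c := by rw [hcdef]; nlinarith [mul_pos hlam hΔt]
  have hc0 : 0 < c := by linarith
  have hcne : c ≠ 0 := ne_of_gt hc0
  have hcsq : (0 : ℝ) < c ^ 2 := by positivity
  obtain ⟨s, hsdef⟩ : ∃ s : ℝ, s = Real.sqrt (2 / β) := ⟨_, rfl⟩
  have hs2 : s ^ 2 = 2 / β := by rw [hsdef]; exact Real.sq_sqrt (by positivity)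
  obtain ⟨a, ha⟩ : ∃ a : Fin d → ℝ,
      a = fun i => u i - Δt * (v i * G' (fun j => u j * v j) i) := ⟨_, rfl⟩
  obtain ⟨bb, hbb⟩ : ∃ bb : Fin d → ℝ,
      bb = fun i => v i - Δt * (u i * G' (fun j => u j * v j) i) := ⟨_, rfl⟩
  have heq1' : ∀ ω i, c * U ω i - Δt / (β * U ω i) = a i + s * W1 ω i := by
    intro ω i; rw [hcdef, ha, hsdef]; exact heq1 ω i
  have heq2' : ∀ ω i, c * V ω i = bb i + s * W2 ω i := by
    intro ω i; rw [hcdef, hbb, hsdef]; exact heq2 ω i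
  rw [← hcdef]
  -- alpha < 1
  have hB2 : Δt * B ^ 2 < lam := by
    rcases eq_or_lt_of_le hB with hB0 | hB0
    · exfalso; rw [← hB0] at hstep; simp at hstep; linarith
    · exact (lt_div_iff₀ (by positivity)).mp hstep
  have halpha : 1 + Δt ^ 2 * B ^ 2 < c ^ 2 := by
    rw [hcdef]
    nlinarith [mul_lt_mul_of_pos_left hB2 hΔt, mul_pos hlam hΔt, sq_nonneg (lam * Δt)]
  have hα1 : (1 + Δt ^ 2 * B ^ 2) / c ^ 2 < 1 := (div_lt_one hcsq).mpr halpha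
  refine ⟨hα1, ?_⟩
  -- pointwise bound
  have key : ∀ ω, (1 + (∑ i, U ω i ^ 2) + ∑ i, V ω i ^ 2)
      ≤ 1 + (∑ i, ((a i + s * W1 ω i) ^ 2 / c ^ 2 + 2 * Δt / (β * c)))
          + ∑ i, (bb i + s * W2 ω i) ^ 2 / c ^ 2 := by
    intro ω
    have hV : ∀ i, V ω i ^ 2 = (bb i + s * W2 ω i) ^ 2 / c ^ 2 := by
      intro i
      have h2 := heq2' ω i
      have hVi : V ω i = (bb i + s * W2 ω i) / c := by
        field_simp
        linarith [h2]
      rw [hVi, div_pow]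
    have hUb : ∀ i, U ω i ^ 2 ≤ (a i + s * W1 ω i) ^ 2 / c ^ 2 + 2 * Δt / (β * c) := by
      intro i
      have h1 := heq1' ω i
      have hUi := hU ω i
      have hUne : U ω i ≠ 0 := ne_of_gt hUi
      have hkey : c * U ω i ^ 2 - Δt / β = (a i + s * W1 ω i) * U ω i := by
        rw [← h1]; field_simp
      have h4 : c ^ 2 * U ω i ^ 2 ≤ (a i + s * W1 ω i) ^ 2 + 2 * (c * (Δt / β)) := by
        have e1 : c ^ 2 * U ω i ^ 2
            = c * ((a i + s * W1 ω i) * U ω i) + c * (Δt / β) := by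
          linear_combination c * hkey
        have e2 : c * ((a i + s * W1 ω i) * U ω i)
            ≤ ((a i + s * W1 ω i) ^ 2 + c ^ 2 * U ω i ^ 2) / 2 := by
          nlinarith [sq_nonneg (a i + s * W1 ω i - c * U ω i)]
        linarith
      calc U ω i ^ 2 = c ^ 2 * U ω i ^ 2 / c ^ 2 := by field_simp
        _ ≤ ((a i + s * W1 ω i) ^ 2 + 2 * (c * (Δt / β))) / c ^ 2 := by gcongr
        _ = (a i + s * W1 ω i) ^ 2 / c ^ 2 + 2 * Δt / (β * c) := by field_simp
    have hsumU := Finset.sum_le_sum (fun i (_ : i ∈ Finset.univ) => hUb i)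
    have hsumV : ∑ i, V ω i ^ 2 = ∑ i, (bb i + s * W2 ω i) ^ 2 / c ^ 2 :=
      Finset.sum_congr rfl (fun i _ => hV i)
    linarith [hsumU, hsumV.le, hsumV.ge]
  -- integrability of the dominating function
  have hintA : ∀ i : Fin d,
      Integrable (fun ω => (a i + s * W1 ω i) ^ 2 / c ^ 2 + 2 * Δt / (β * c)) ℙ := fun i =>
    ((omega_affine_int' hΔt (hmeas1 i) (hlaw1 i) (a i) s).div_const _).add (integrable_const _)
  have hintB : ∀ i : Fin d,
      Integrable (fun ω => (bb i + s * W2 ω i) ^ 2 / c ^ 2) ℙ := fun i =>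
    (omega_affine_int' hΔt (hmeas2 i) (hlaw2 i) (bb i) s).div_const _
  have hA : Integrable (fun ω => ∑ i, ((a i + s * W1 ω i) ^ 2 / c ^ 2 + 2 * Δt / (β * c))) ℙ :=
    integrable_finset_sum _ (fun i _ => hintA i)
  have hB' : Integrable (fun ω => ∑ i, (bb i + s * W2 ω i) ^ 2 / c ^ 2) ℙ :=
    integrable_finset_sum _ (fun i _ => hintB i)
  have hCA : Integrable (fun ω =>
      1 + ∑ i, ((a i + s * W1 ω i) ^ 2 / c ^ 2 + 2 * Δt / (β * c))) ℙ :=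
    (integrable_const _).add hA
  have hFint : Integrable (fun ω => 1 + (∑ i, ((a i + s * W1 ω i) ^ 2 / c ^ 2 + 2 * Δt / (β * c)))
      + ∑ i, (bb i + s * W2 ω i) ^ 2 / c ^ 2) ℙ := hCA.add hB'
  have hmono : (∫ ω, (1 + (∑ i, U ω i ^ 2) + ∑ i, V ω i ^ 2)) ≤
      ∫ ω, (1 + (∑ i, ((a i + s * W1 ω i) ^ 2 / c ^ 2 + 2 * Δt / (β * c)))
        + ∑ i, (bb i + s * W2 ω i) ^ 2 / c ^ 2) :=
    integral_mono_of_nonneg (ae_of_all _ fun ω => by positivity) hFint (ae_of_all _ key)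
  -- compute the integral of the dominating function
  have hEA : ∫ ω, (∑ i, ((a i + s * W1 ω i) ^ 2 / c ^ 2 + 2 * Δt / (β * c))) =
      ∑ i : Fin d, ((a i ^ 2 + s ^ 2 * Δt) / c ^ 2 + 2 * Δt / (β * c)) := by
    rw [integral_finset_sum _ (fun i _ => hintA i)]
    refine Finset.sum_congr rfl fun i _ => ?_
    rw [integral_add ((omega_affine_int' hΔt (hmeas1 i) (hlaw1 i) (a i) s).div_const _)
      (integrable_const _), integral_div, omega_affine_eq' hΔt (hmeas1 i) (hlaw1 i) (a i) s,
      integral_const]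
    simp
  have hEB : ∫ ω, (∑ i, (bb i + s * W2 ω i) ^ 2 / c ^ 2)
      = ∑ i : Fin d, (bb i ^ 2 + s ^ 2 * Δt) / c ^ 2 := by
    rw [integral_finset_sum _ (fun i _ => hintB i)]
    refine Finset.sum_congr rfl fun i _ => ?_
    rw [integral_div, omega_affine_eq' hΔt (hmeas2 i) (hlaw2 i) (bb i) s]
  have hEF : (∫ ω, (1 + (∑ i, ((a i + s * W1 ω i) ^ 2 / c ^ 2 + 2 * Δt / (β * c)))
      + ∑ i, (bb i + s * W2 ω i) ^ 2 / c ^ 2))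
      = 1 + (∑ i : Fin d, ((a i ^ 2 + s ^ 2 * Δt) / c ^ 2 + 2 * Δt / (β * c)))
        + ∑ i : Fin d, (bb i ^ 2 + s ^ 2 * Δt) / c ^ 2 := by
    rw [integral_add hCA hB', integral_add (integrable_const _) hA, hEA, hEB, integral_const]
    simp
  rw [hEF] at hmono
  -- rewrite the constant sums
  have hsum1 : ∑ i : Fin d, ((a i ^ 2 + s ^ 2 * Δt) / c ^ 2 + 2 * Δt / (β * c))
      = (∑ i, a i ^ 2) / c ^ 2 + (d : ℝ) * (s ^ 2 * Δt / c ^ 2 + 2 * Δt / (β * c)) := by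
    have h : ∀ i : Fin d, (a i ^ 2 + s ^ 2 * Δt) / c ^ 2 + 2 * Δt / (β * c)
        = a i ^ 2 / c ^ 2 + (s ^ 2 * Δt / c ^ 2 + 2 * Δt / (β * c)) := fun i => by ring
    simp_rw [h]
    rw [Finset.sum_add_distrib, ← Finset.sum_div, Finset.sum_const, Finset.card_univ,
      Fintype.card_fin, nsmul_eq_mul]
  have hsum2 : ∑ i : Fin d, (bb i ^ 2 + s ^ 2 * Δt) / c ^ 2
      = (∑ i, bb i ^ 2) / c ^ 2 + (d : ℝ) * (s ^ 2 * Δt / c ^ 2) := by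
    have h : ∀ i : Fin d, (bb i ^ 2 + s ^ 2 * Δt) / c ^ 2
        = bb i ^ 2 / c ^ 2 + s ^ 2 * Δt / c ^ 2 := fun i => by ring
    simp_rw [h]
    rw [Finset.sum_add_distrib, ← Finset.sum_div, Finset.sum_const, Finset.card_univ,
      Fintype.card_fin, nsmul_eq_mul]
  rw [hsum1, hsum2] at hmono
  -- the deterministic data-term estimate
  have hab : (∑ i, a i ^ 2) + (∑ i, bb i ^ 2)
      ≤ (1 + Δt ^ 2 * B ^ 2) * ((∑ i, u i ^ 2) + ∑ i, v i ^ 2) + 4 * K * Δt := by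
    have hpt : ∀ i : Fin d, a i ^ 2 + bb i ^ 2
        = (u i ^ 2 + v i ^ 2) - 4 * Δt * (u i * v i * G' (fun j => u j * v j) i)
          + Δt ^ 2 * (G' (fun j => u j * v j) i ^ 2 * (u i ^ 2 + v i ^ 2)) := fun i => by
      simp only [ha, hbb]; ring
    have h1 : -K ≤ ∑ i, u i * v i * G' (fun j => u j * v j) i := by
      simpa using hGK fun j => u j * v j
    have h2 : ∑ i, G' (fun j => u j * v j) i ^ 2 * (u i ^ 2 + v i ^ 2)
        ≤ B ^ 2 * ∑ i, (u i ^ 2 + v i ^ 2) := by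
      rw [Finset.mul_sum]
      refine Finset.sum_le_sum fun i _ => ?_
      have hgb := abs_le.mp (hGB (fun j => u j * v j) i)
      have hsq : G' (fun j => u j * v j) i ^ 2 ≤ B ^ 2 := sq_le_sq' hgb.1 hgb.2
      exact mul_le_mul_of_nonneg_right hsq (by positivity)
    calc (∑ i, a i ^ 2) + (∑ i, bb i ^ 2) = ∑ i, (a i ^ 2 + bb i ^ 2) := by
          rw [Finset.sum_add_distrib]
      _ = (∑ i, (u i ^ 2 + v i ^ 2)) - 4 * Δt * (∑ i, u i * v i * G' (fun j => u j * v j) i)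
          + Δt ^ 2 * (∑ i, G' (fun j => u j * v j) i ^ 2 * (u i ^ 2 + v i ^ 2)) := by
          simp_rw [hpt]
          rw [Finset.sum_add_distrib, Finset.sum_sub_distrib, ← Finset.mul_sum, ← Finset.mul_sum]
      _ ≤ (∑ i, (u i ^ 2 + v i ^ 2)) + 4 * Δt * K
          + Δt ^ 2 * (B ^ 2 * ∑ i, (u i ^ 2 + v i ^ 2)) := by
          have h4 : 4 * Δt * (-(∑ i, u i * v i * G' (fun j => u j * v j) i)) ≤ 4 * Δt * K :=
            mul_le_mul_of_nonneg_left (by linarith) (by positivity)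
          have h5 := mul_le_mul_of_nonneg_left h2 (sq_nonneg Δt)
          linarith
      _ = (1 + Δt ^ 2 * B ^ 2) * ((∑ i, u i ^ 2) + ∑ i, v i ^ 2) + 4 * K * Δt := by
          rw [Finset.sum_add_distrib]; ring
  -- final algebra
  have hd0 : (0 : ℝ) ≤ (d : ℝ) := Nat.cast_nonneg d
  have hLHS : (1 : ℝ) + ((∑ i, a i ^ 2) / c ^ 2 + (d : ℝ) * (s ^ 2 * Δt / c ^ 2 + 2 * Δt / (β * c)))
      + ((∑ i, bb i ^ 2) / c ^ 2 + (d : ℝ) * (s ^ 2 * Δt / c ^ 2))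
      = 1 + ((∑ i, a i ^ 2) + (∑ i, bb i ^ 2) + 4 * (d : ℝ) * Δt / β
          + 2 * c * (d : ℝ) * Δt / β) / c ^ 2 := by
    rw [hs2]; field_simp; ring
  have hRHS : ((1 + Δt ^ 2 * B ^ 2) / c ^ 2) * (1 + (∑ i, u i ^ 2) + ∑ i, v i ^ 2)
      + ((1 - (1 + Δt ^ 2 * B ^ 2) / c ^ 2) + 4 * K * Δt / c ^ 2
        + (4 * (1 + Δt * lam) * (d : ℝ) + 4 * (d : ℝ)) / (β * c ^ 2) * Δt)
      = 1 + ((1 + Δt ^ 2 * B ^ 2) * ((∑ i, u i ^ 2) + ∑ i, v i ^ 2) + 4 * K * Δt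
          + (4 * c * (d : ℝ) + 4 * (d : ℝ)) * Δt / β) / c ^ 2 := by
    rw [hcdef]; field_simp; ring
  have hnum : (∑ i, a i ^ 2) + (∑ i, bb i ^ 2) + 4 * (d : ℝ) * Δt / β + 2 * c * (d : ℝ) * Δt / β
      ≤ (1 + Δt ^ 2 * B ^ 2) * ((∑ i, u i ^ 2) + ∑ i, v i ^ 2) + 4 * K * Δt
        + (4 * c * (d : ℝ) + 4 * (d : ℝ)) * Δt / β := by
    have h5 : (0 : ℝ) ≤ c * (d : ℝ) * Δt / β := by positivity
    have h6 : (4 * c * (d : ℝ) + 4 * (d : ℝ)) * Δt / β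
        = 4 * (c * (d : ℝ) * Δt / β) + 4 * (d : ℝ) * Δt / β := by ring
    have h7 : 2 * c * (d : ℝ) * Δt / β = 2 * (c * (d : ℝ) * Δt / β) := by ring
    linarith
  calc (∫ ω, (1 + (∑ i, U ω i ^ 2) + ∑ i, V ω i ^ 2))
      ≤ 1 + ((∑ i, a i ^ 2) / c ^ 2 + (d : ℝ) * (s ^ 2 * Δt / c ^ 2 + 2 * Δt / (β * c)))
        + ((∑ i, bb i ^ 2) / c ^ 2 + (d : ℝ) * (s ^ 2 * Δt / c ^ 2)) := hmono
    _ = 1 + ((∑ i, a i ^ 2) + (∑ i, bb i ^ 2) + 4 * (d : ℝ) * Δt / β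
          + 2 * c * (d : ℝ) * Δt / β) / c ^ 2 := hLHS
    _ ≤ 1 + ((1 + Δt ^ 2 * B ^ 2) * ((∑ i, u i ^ 2) + ∑ i, v i ^ 2) + 4 * K * Δt
          + (4 * c * (d : ℝ) + 4 * (d : ℝ)) * Δt / β) / c ^ 2 := by gcongr
    _ = _ := hRHS.symm
end
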